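/- arXiv:1907.07814 — 2 statements merged into one kernel-verified Lean document; each statement's English description precedes it below -/
import Mathlib

section
/- For every n ≥ 0 and all u, v ∈ R, the Möbius-type enumerators satisfy the binomial-type identity b_n(u+v; w) = Σ_{i=0}^{n} C(n,i) · b_i(u; w) · b_{n−i}(v; w). (Theorem 3.4, part 1, Möbius-type case.) -/
open Finset

variable {R : Type*} [CommRing R] [Algebra ℚ R]

/-- The zeta-type function `w(τ, σ) = ∏_{B a block of σ} w(#{blocks of τ contained in B})`,
for `τ ≤ σ` in the partition lattice. -/
noncomputable def zetaRel (w : ℕ → R) {n : ℕ}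
    (τ σ : Finpartition (univ : Finset (Fin n))) : R :=
  ∏ B ∈ σ.parts, w ((τ.parts.filter fun A => A ⊆ B).card)

open scoped Classical in
/-- The Möbius-type function: `µ^w(π, π) = 1` and
`µ^w(π, σ) = -∑_{π ≤ τ < σ} µ^w(π, τ) w(τ, σ)` for `π < σ`. -/
noncomputable def muW (w : ℕ → R) {n : ℕ} (π : Finpartition (univ : Finset (Fin n)))
    (σ : Finpartition (univ : Finset (Fin n))) : R :=
  if π = σ then 1
  else -∑ τ ∈ (Finset.univ.filter fun τ => π ≤ τ ∧ τ < σ).attach,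
        muW w π τ.1 * zetaRel w τ.1 σ
termination_by (Finset.univ.filter fun τ => τ < σ).card
decreasing_by
  classical
  obtain ⟨-, hτσ⟩ := (Finset.mem_filter.mp τ.2).2
  apply Finset.card_lt_card
  constructor
  · intro x hx
    simp only [Finset.mem_filter, Finset.mem_univ, true_and] at hx ⊢
    exact hx.trans hτσ
  · intro hsub
    have hτ : τ.1 ∈ Finset.univ.filter fun x => x < σ := by simp [hτσ]
    have := hsub hτ
    simp at this

/-- The Möbius-type enumerator `b_n(x; w)`: `b_0 = 1` and
`b_n(x; w) = ∑_{π ∈ Π_n} µ^w(0̂, π) x^{|π|}` for `n ≥ 1`. -/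
noncomputable def bEnum (w : ℕ → R) (n : ℕ) (x : R) : R :=
  if n = 0 then 1 else
    ∑ π : Finpartition (univ : Finset (Fin n)), muW w ⊥ π * x ^ π.parts.card

section General
variable {α : Type*} [DecidableEq α]

variable {α : Type*} [DecidableEq α]

open scoped Classical in
noncomputable def muG (w : ℕ → R) {s : Finset α} (σ : Finpartition s) : R :=
  if σ = ⊥ then 1
  else -∑ τ ∈ (Finset.univ.filter fun τ => τ < σ).attach,
        muG w τ.1 * ∏ B ∈ σ.parts, w ((τ.1.parts.filter fun A => A ⊆ B).card)
termination_by (Finset.univ.filter fun τ => τ < σ).card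
decreasing_by
  classical
  have hτσ := (Finset.mem_filter.mp τ.2).2
  apply Finset.card_lt_card
  constructor
  · intro x hx
    simp only [Finset.mem_filter, Finset.mem_univ, true_and] at hx ⊢
    exact hx.trans hτσ
  · intro hsub
    have hτ : τ.1 ∈ Finset.univ.filter fun x => x < σ := by simp [hτσ]
    have := hsub hτ
    simp at this

noncomputable def zetaG (w : ℕ → R) {s : Finset α}
    (τ σ : Finpartition s) : R :=
  ∏ B ∈ σ.parts, w ((τ.parts.filter fun A => A ⊆ B).card)

open scoped Classical in
lemma muG_def (w : ℕ → R) {s : Finset α} (σ : Finpartition s) :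
    muG w σ = if σ = ⊥ then 1
      else -∑ τ ∈ (Finset.univ.filter fun τ => τ < σ).attach,
        muG w τ.1 * zetaG w τ.1 σ := by
  rw [muG]; rfl



-- disjoint union of finpartitions
def unionFP {s t : Finset α} (hst : Disjoint s t)
    (σ1 : Finpartition s) (σ2 : Finpartition t) : Finpartition (s ∪ t) where
  parts := σ1.parts ∪ σ2.parts
  supIndep := by
    rw [Finset.supIndep_iff_pairwiseDisjoint, coe_union]
    rw [Set.pairwiseDisjoint_union]
    refine ⟨σ1.supIndep.pairwiseDisjoint, σ2.supIndep.pairwiseDisjoint, ?_⟩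
    intro P hP Q hQ _
    exact (hst.mono (σ1.le hP) (σ2.le hQ))
  sup_parts := by
    rw [Finset.sup_union, σ1.sup_parts, σ2.sup_parts, sup_eq_union]
  bot_notMem := by
    simp only [Finset.mem_union, not_or]
    exact ⟨σ1.bot_notMem, σ2.bot_notMem⟩

@[simp] lemma unionFP_parts {s t : Finset α} (hst : Disjoint s t)
    (σ1 : Finpartition s) (σ2 : Finpartition t) :
    (unionFP hst σ1 σ2).parts = σ1.parts ∪ σ2.parts := rfl

lemma parts_disjoint {s t : Finset α} (hst : Disjoint s t)
    (σ1 : Finpartition s) (σ2 : Finpartition t) : Disjoint σ1.parts σ2.parts := by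
  rw [Finset.disjoint_left]
  intro P hP1 hP2
  have h1 : P ⊆ s := σ1.le hP1
  have h2 : P ⊆ t := σ2.le hP2
  obtain ⟨x, hx⟩ := σ1.nonempty_of_mem_parts hP1
  exact Finset.disjoint_left.mp hst (h1 hx) (h2 hx)

def splitL {s t : Finset α} (hst : Disjoint s t) (τ : Finpartition (s ∪ t))
    (h : ∀ P ∈ τ.parts, P ⊆ s ∨ P ⊆ t) : Finpartition s :=
  τ.ofSubset (Finset.filter_subset (fun P => P ⊆ s) τ.parts) (by
    apply le_antisymm
    · apply Finset.sup_le
      intro P hP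
      exact (Finset.mem_filter.mp hP).2
    · intro x hx
      have hxu : x ∈ s ∪ t := Finset.mem_union_left _ hx
      obtain ⟨P, hP, hxP⟩ := τ.exists_mem hxu
      have hPs : P ⊆ s := by
        rcases h P hP with h' | h'
        · exact h'
        · exact absurd (h' hxP) (Finset.disjoint_left.mp hst hx)
      rw [Finset.mem_sup]
      exact ⟨P, Finset.mem_filter.mpr ⟨hP, hPs⟩, hxP⟩)

def splitR {s t : Finset α} (hst : Disjoint s t) (τ : Finpartition (s ∪ t))
    (h : ∀ P ∈ τ.parts, P ⊆ s ∨ P ⊆ t) : Finpartition t :=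
  τ.ofSubset (Finset.filter_subset (fun P => P ⊆ t) τ.parts) (by
    apply le_antisymm
    · apply Finset.sup_le
      intro P hP
      exact (Finset.mem_filter.mp hP).2
    · intro x hx
      have hxu : x ∈ s ∪ t := Finset.mem_union_right _ hx
      obtain ⟨P, hP, hxP⟩ := τ.exists_mem hxu
      have hPt : P ⊆ t := by
        rcases h P hP with h' | h'
        · exact absurd (h' hxP) (Finset.disjoint_right.mp hst hx)
        · exact h'
      rw [Finset.mem_sup]
      exact ⟨P, Finset.mem_filter.mpr ⟨hP, hPt⟩, hxP⟩)

@[simp] lemma splitL_parts {s t : Finset α} (hst : Disjoint s t) (τ : Finpartition (s ∪ t))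
    (h) : (splitL hst τ h).parts = τ.parts.filter (fun P => P ⊆ s) := rfl

@[simp] lemma splitR_parts {s t : Finset α} (hst : Disjoint s t) (τ : Finpartition (s ∪ t))
    (h) : (splitR hst τ h).parts = τ.parts.filter (fun P => P ⊆ t) := rfl

lemma part_subset_or {s t : Finset α} (hst : Disjoint s t) {σ1 : Finpartition s}
    {σ2 : Finpartition t} {τ : Finpartition (s ∪ t)} (hτ : τ ≤ unionFP hst σ1 σ2) :
    ∀ P ∈ τ.parts, P ⊆ s ∨ P ⊆ t := by
  intro P hP
  obtain ⟨Q, hQ, hPQ⟩ := hτ hP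
  rcases Finset.mem_union.mp hQ with h | h
  · exact Or.inl (hPQ.trans (σ1.le h))
  · exact Or.inr (hPQ.trans (σ2.le h))

lemma not_subset_both {s t : Finset α} (hst : Disjoint s t) {u : Finset α}
    {τ : Finpartition u} {P : Finset α} (hP : P ∈ τ.parts) (h1 : P ⊆ s) (h2 : P ⊆ t) : False := by
  obtain ⟨x, hx⟩ := τ.nonempty_of_mem_parts hP
  exact Finset.disjoint_left.mp hst (h1 hx) (h2 hx)

lemma splitL_unionFP {s t : Finset α} (hst : Disjoint s t) (σ1 : Finpartition s)
    (σ2 : Finpartition t) (h) : splitL hst (unionFP hst σ1 σ2) h = σ1 := by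
  ext P
  simp only [splitL_parts, unionFP_parts, Finset.mem_filter, Finset.mem_union]
  constructor
  · rintro ⟨h1 | h1, h2⟩
    · exact h1
    · exact absurd h2 (fun hh => not_subset_both hst (by simp [h1]
        : P ∈ (unionFP hst σ1 σ2).parts) hh (σ2.le h1))
  · intro hP
    exact ⟨Or.inl hP, σ1.le hP⟩

lemma splitR_unionFP {s t : Finset α} (hst : Disjoint s t) (σ1 : Finpartition s)
    (σ2 : Finpartition t) (h) : splitR hst (unionFP hst σ1 σ2) h = σ2 := by
  ext P
  simp only [splitR_parts, unionFP_parts, Finset.mem_filter, Finset.mem_union]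
  constructor
  · rintro ⟨h1 | h1, h2⟩
    · exact absurd h2 (fun hh => not_subset_both hst (by simp [h1]
        : P ∈ (unionFP hst σ1 σ2).parts) (σ1.le h1) hh)
    · exact h1
  · intro hP
    exact ⟨Or.inr hP, σ2.le hP⟩

lemma unionFP_split {s t : Finset α} (hst : Disjoint s t) (τ : Finpartition (s ∪ t))
    (h) : unionFP hst (splitL hst τ h) (splitR hst τ h) = τ := by
  ext P
  simp only [unionFP_parts, splitL_parts, splitR_parts, Finset.mem_union, Finset.mem_filter]
  constructor
  · rintro (⟨h1, _⟩ | ⟨h1, _⟩) <;> exact h1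
  · intro hP
    rcases h P hP with h' | h'
    · exact Or.inl ⟨hP, h'⟩
    · exact Or.inr ⟨hP, h'⟩

lemma unionFP_mono {s t : Finset α} (hst : Disjoint s t) {τ1 σ1 : Finpartition s}
    {τ2 σ2 : Finpartition t} (h1 : τ1 ≤ σ1) (h2 : τ2 ≤ σ2) :
    unionFP hst τ1 τ2 ≤ unionFP hst σ1 σ2 := by
  intro P hP
  rcases Finset.mem_union.mp hP with h | h
  · obtain ⟨Q, hQ, hPQ⟩ := h1 h
    exact ⟨Q, Finset.mem_union_left _ hQ, hPQ⟩
  · obtain ⟨Q, hQ, hPQ⟩ := h2 h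
    exact ⟨Q, Finset.mem_union_right _ hQ, hPQ⟩

lemma splitL_mono {s t : Finset α} (hst : Disjoint s t) {τ : Finpartition (s ∪ t)}
    {σ1 : Finpartition s} {σ2 : Finpartition t} (hτ : τ ≤ unionFP hst σ1 σ2) (h) :
    splitL hst τ h ≤ σ1 := by
  intro P hP
  rw [splitL_parts, Finset.mem_filter] at hP
  obtain ⟨Q, hQ, hPQ⟩ := hτ hP.1
  rcases Finset.mem_union.mp hQ with h' | h'
  · exact ⟨Q, h', hPQ⟩
  · obtain ⟨x, hx⟩ := τ.nonempty_of_mem_parts hP.1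
    exact absurd (σ2.le h' (hPQ hx)) (Finset.disjoint_left.mp hst (hP.2 hx))

lemma splitR_mono {s t : Finset α} (hst : Disjoint s t) {τ : Finpartition (s ∪ t)}
    {σ1 : Finpartition s} {σ2 : Finpartition t} (hτ : τ ≤ unionFP hst σ1 σ2) (h) :
    splitR hst τ h ≤ σ2 := by
  intro P hP
  rw [splitR_parts, Finset.mem_filter] at hP
  obtain ⟨Q, hQ, hPQ⟩ := hτ hP.1
  rcases Finset.mem_union.mp hQ with h' | h'
  · obtain ⟨x, hx⟩ := τ.nonempty_of_mem_parts hP.1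
    exact absurd (hP.2 hx) (Finset.disjoint_left.mp hst (σ1.le h' (hPQ hx)))
  · exact ⟨Q, h', hPQ⟩

lemma unionFP_bot {s t : Finset α} (hst : Disjoint s t) :
    unionFP hst (⊥ : Finpartition s) (⊥ : Finpartition t) = ⊥ := by
  ext P
  simp only [unionFP_parts, Finset.mem_union, Finpartition.mem_bot_iff]
  constructor
  · rintro (h | h) <;>
    · obtain ⟨a, ha, rfl⟩ := h
      exact ⟨a, by simp [ha], rfl⟩
  · rintro ⟨a, ha, rfl⟩
    rcases ha with h | h
    · exact Or.inl ⟨a, h, rfl⟩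
    · exact Or.inr ⟨a, h, rfl⟩

lemma unionFP_eq_bot_iff {s t : Finset α} (hst : Disjoint s t) {σ1 : Finpartition s}
    {σ2 : Finpartition t} : unionFP hst σ1 σ2 = ⊥ ↔ σ1 = ⊥ ∧ σ2 = ⊥ := by
  constructor
  · intro h
    constructor
    · apply le_bot_iff.mp
      intro P hP
      have hP' : P ∈ (unionFP hst σ1 σ2).parts := Finset.mem_union_left _ hP
      rw [h, Finpartition.mem_bot_iff] at hP'
      obtain ⟨a, ha, rfl⟩ := hP'
      have has : a ∈ s := σ1.le hP (Finset.mem_singleton_self a)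
      exact ⟨{a}, Finpartition.mem_bot_iff.mpr ⟨a, has, rfl⟩, le_rfl⟩
    · apply le_bot_iff.mp
      intro P hP
      have hP' : P ∈ (unionFP hst σ1 σ2).parts := Finset.mem_union_right _ hP
      rw [h, Finpartition.mem_bot_iff] at hP'
      obtain ⟨a, ha, rfl⟩ := hP'
      have has : a ∈ t := σ2.le hP (Finset.mem_singleton_self a)
      exact ⟨{a}, Finpartition.mem_bot_iff.mpr ⟨a, has, rfl⟩, le_rfl⟩
  · rintro ⟨rfl, rfl⟩
    exact unionFP_bot hst

lemma filter_subset_self_parts {s : Finset α} (σ : Finpartition s) {B : Finset α}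
    (hB : B ∈ σ.parts) : σ.parts.filter (fun A => A ⊆ B) = {B} := by
  ext A
  simp only [Finset.mem_filter, Finset.mem_singleton]
  constructor
  · rintro ⟨hA, hAB⟩
    by_contra hne
    have := σ.disjoint hA hB hne
    obtain ⟨x, hx⟩ := σ.nonempty_of_mem_parts hA
    exact Finset.disjoint_left.mp this hx (hAB hx)
  · rintro rfl
    exact ⟨hB, le_rfl⟩

lemma zetaG_self {w : ℕ → R} (hw : w 1 = 1) {s : Finset α} (σ : Finpartition s) :
    zetaG w σ σ = 1 := by
  unfold zetaG
  rw [Finset.prod_congr rfl (fun B hB => by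
    rw [filter_subset_self_parts σ hB, Finset.card_singleton, hw])]
  simp

open scoped Classical in
lemma muG_inversion {w : ℕ → R} (hw : w 1 = 1) {s : Finset α} (σ : Finpartition s) :
    ∑ τ ∈ Finset.univ.filter (fun τ => τ ≤ σ), muG w τ * zetaG w τ σ
      = if σ = ⊥ then 1 else 0 := by
  by_cases hσ : σ = ⊥
  · subst hσ
    have : Finset.univ.filter (fun τ : Finpartition s => τ ≤ ⊥) = {⊥} := by
      ext τ; simp [le_bot_iff]
    rw [this, Finset.sum_singleton, if_pos rfl, zetaG_self hw, muG_def]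
    simp
  · rw [if_neg hσ]
    have hsplit : Finset.univ.filter (fun τ : Finpartition s => τ ≤ σ)
        = insert σ (Finset.univ.filter (fun τ => τ < σ)) := by
      ext τ
      simp only [Finset.mem_filter, Finset.mem_univ, true_and, Finset.mem_insert]
      rw [le_iff_lt_or_eq, or_comm]
    rw [hsplit, Finset.sum_insert (by simp)]
    rw [zetaG_self hw, mul_one, muG_def, if_neg hσ]
    rw [← Finset.sum_attach (Finset.univ.filter (fun τ => τ < σ))
      (fun τ => muG w τ * zetaG w τ σ)]
    exact neg_add_cancel _

lemma zetaG_unionFP {w : ℕ → R} {s t : Finset α} (hst : Disjoint s t)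
    (τ1 σ1 : Finpartition s) (τ2 σ2 : Finpartition t) :
    zetaG w (unionFP hst τ1 τ2) (unionFP hst σ1 σ2)
      = zetaG w τ1 σ1 * zetaG w τ2 σ2 := by
  unfold zetaG
  rw [unionFP_parts, Finset.prod_union (parts_disjoint hst σ1 σ2)]
  congr 1
  · apply Finset.prod_congr rfl
    intro B hB
    congr 2
    rw [unionFP_parts, Finset.filter_union]
    have : τ2.parts.filter (fun A => A ⊆ B) = ∅ := by
      rw [Finset.filter_eq_empty_iff]
      intro A hA hAB
      exact not_subset_both hst hA (hAB.trans (σ1.le hB)) (τ2.le hA)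
    rw [this, Finset.union_empty]
  · apply Finset.prod_congr rfl
    intro B hB
    congr 2
    rw [unionFP_parts, Finset.filter_union]
    have : τ1.parts.filter (fun A => A ⊆ B) = ∅ := by
      rw [Finset.filter_eq_empty_iff]
      intro A hA hAB
      exact not_subset_both hst hA (τ1.le hA) (hAB.trans (σ2.le hB))
    rw [this, Finset.empty_union]

open scoped Classical in
lemma muG_unionFP {w : ℕ → R} (hw : w 1 = 1) {s t : Finset α} (hst : Disjoint s t)
    (σ1 : Finpartition s) (σ2 : Finpartition t) :
    muG w (unionFP hst σ1 σ2) = muG w σ1 * muG w σ2 := by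
  classical
  suffices H : ∀ σ : Finpartition (s ∪ t), ∀ σ1 σ2, unionFP hst σ1 σ2 = σ →
      muG w σ = muG w σ1 * muG w σ2 from H _ σ1 σ2 rfl
  intro σ
  induction σ using WellFoundedLT.induction with
  | _ σ ih =>
    rintro σ1 σ2 rfl
    by_cases hbot : σ1 = ⊥ ∧ σ2 = ⊥
    · obtain ⟨rfl, rfl⟩ := hbot
      rw [unionFP_bot, muG_def, if_pos rfl, muG_def, if_pos rfl, muG_def, if_pos rfl]
      ring
    · have hne : unionFP hst σ1 σ2 ≠ ⊥ := fun h => hbot ((unionFP_eq_bot_iff hst).mp h)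
      rw [muG_def, if_neg hne]
      rw [Finset.sum_attach (Finset.univ.filter (fun τ => τ < unionFP hst σ1 σ2))
        (fun τ => muG w τ * zetaG w τ (unionFP hst σ1 σ2))]
      -- reindex over pairs
      have key : ∑ τ ∈ Finset.univ.filter (fun τ => τ < unionFP hst σ1 σ2),
          muG w τ * zetaG w τ (unionFP hst σ1 σ2)
          = ∑ p ∈ ((Finset.univ.filter (fun τ1 => τ1 ≤ σ1)) ×ˢ
              (Finset.univ.filter (fun τ2 => τ2 ≤ σ2))).erase (σ1, σ2),
            (muG w p.1 * zetaG w p.1 σ1) * (muG w p.2 * zetaG w p.2 σ2) := by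
        refine Finset.sum_bij'
          (fun τ hτ => (splitL hst τ (part_subset_or hst
              (le_of_lt (Finset.mem_filter.mp hτ).2)),
            splitR hst τ (part_subset_or hst (le_of_lt (Finset.mem_filter.mp hτ).2))))
          (fun p _ => unionFP hst p.1 p.2) ?_ ?_ ?_ ?_ ?_
        · intro τ hτ
          have hlt := (Finset.mem_filter.mp hτ).2
          have h := part_subset_or hst (le_of_lt hlt)
          rw [Finset.mem_erase]
          constructor
          · intro hcon
            have h1 : splitL hst τ h = σ1 := congrArg Prod.fst hcon
            have h2 : splitR hst τ h = σ2 := congrArg Prod.snd hcon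
            have : τ = unionFP hst σ1 σ2 := by
              rw [← h1, ← h2, unionFP_split]
            exact absurd this (ne_of_lt hlt)
          · rw [Finset.mem_product]
            exact ⟨Finset.mem_filter.mpr ⟨Finset.mem_univ _, splitL_mono hst (le_of_lt hlt) h⟩,
              Finset.mem_filter.mpr ⟨Finset.mem_univ _, splitR_mono hst (le_of_lt hlt) h⟩⟩
        · rintro ⟨p1, p2⟩ hp
          rw [Finset.mem_erase, Finset.mem_product] at hp
          obtain ⟨hne', hp1, hp2⟩ := hp
          rw [Finset.mem_filter]
          refine ⟨Finset.mem_univ _, lt_of_le_of_ne ?_ ?_⟩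
          · exact unionFP_mono hst (Finset.mem_filter.mp hp1).2 (Finset.mem_filter.mp hp2).2
          · intro hcon
            apply hne'
            have h1 := splitL_unionFP hst p1 p2 (part_subset_or hst (le_of_eq hcon))
            have h2 := splitR_unionFP hst p1 p2 (part_subset_or hst (le_of_eq hcon))
            have h1' := splitL_unionFP hst σ1 σ2 (part_subset_or hst (le_refl _))
            have h2' := splitR_unionFP hst σ1 σ2 (part_subset_or hst (le_refl _))
            have hc : unionFP hst p1 p2 = unionFP hst σ1 σ2 := hcon
            have e1 : p1 = σ1 := by
              apply Finpartition.ext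
              rw [← congrArg Finpartition.parts h1, ← congrArg Finpartition.parts h1']
              simp only [splitL_parts]
              rw [hc]
            have e2 : p2 = σ2 := by
              apply Finpartition.ext
              rw [← congrArg Finpartition.parts h2, ← congrArg Finpartition.parts h2']
              simp only [splitR_parts]
              rw [hc]
            rw [e1, e2]
        · intro τ hτ
          exact unionFP_split hst τ (part_subset_or hst
            (le_of_lt (Finset.mem_filter.mp hτ).2))
        · rintro ⟨p1, p2⟩ hp
          have e1 := splitL_unionFP hst p1 p2 (part_subset_or hst (le_refl _))
          have e2 := splitR_unionFP hst p1 p2 (part_subset_or hst (le_refl _))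
          exact Prod.ext e1 e2
        · intro τ hτ
          have hlt := (Finset.mem_filter.mp hτ).2
          have h := part_subset_or hst (le_of_lt hlt)
          have hdecomp : τ = unionFP hst (splitL hst τ h) (splitR hst τ h) :=
            (unionFP_split hst τ h).symm
          have hIH : muG w τ = muG w (splitL hst τ h) * muG w (splitR hst τ h) :=
            ih τ hlt _ _ hdecomp.symm
          have hz : zetaG w τ (unionFP hst σ1 σ2)
              = zetaG w (splitL hst τ h) σ1 * zetaG w (splitR hst τ h) σ2 := by
            conv_lhs => rw [hdecomp]
            rw [zetaG_unionFP]
          rw [hIH, hz]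
          ring
      rw [key]
      rw [Finset.sum_erase_eq_sub (by
        rw [Finset.mem_product]
        exact ⟨Finset.mem_filter.mpr ⟨Finset.mem_univ _, le_refl _⟩,
          Finset.mem_filter.mpr ⟨Finset.mem_univ _, le_refl _⟩⟩)]
      rw [Finset.sum_product]
      dsimp only
      rw [← Finset.sum_mul_sum]
      rw [muG_inversion hw σ1, muG_inversion hw σ2]
      rw [zetaG_self hw, zetaG_self hw]
      have : ¬(σ1 = ⊥ ∧ σ2 = ⊥) := hbot
      rcases Classical.em (σ1 = ⊥) with h1 | h1
      · simp only [h1, if_pos rfl]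
        have h2 : σ2 ≠ ⊥ := fun h => this ⟨h1, h⟩
        rw [if_neg h2]
        ring
      · rw [if_neg h1]
        ring

section MapFP
variable {β : Type*} [DecidableEq β] {f : α → β} {s : Finset α}

lemma sup_image_finset (hf : Function.Injective f) (P : Finset (Finset α)) :
    (P.image (Finset.image f)).sup id = (P.sup id).image f := by
  ext y
  constructor
  · intro hy
    obtain ⟨Q, hQ, hyQ⟩ := Finset.mem_sup.mp hy
    obtain ⟨A, hA, rfl⟩ := Finset.mem_image.mp hQ
    obtain ⟨x, hx, rfl⟩ := Finset.mem_image.mp hyQ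
    exact Finset.mem_image_of_mem f (Finset.mem_sup.mpr ⟨A, hA, hx⟩)
  · intro hy
    obtain ⟨x, hx, rfl⟩ := Finset.mem_image.mp hy
    obtain ⟨A, hA, hxA⟩ := Finset.mem_sup.mp hx
    exact Finset.mem_sup.mpr ⟨A.image f, Finset.mem_image_of_mem _ hA,
      Finset.mem_image_of_mem f hxA⟩

def mapFP (hf : Function.Injective f) (π : Finpartition s) : Finpartition (s.image f) where
  parts := π.parts.image (Finset.image f)
  supIndep := by
    rw [Finset.supIndep_iff_pairwiseDisjoint]
    intro x hx y hy hxy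
    obtain ⟨P, hP, rfl⟩ := Finset.mem_image.mp (Finset.mem_coe.mp hx)
    obtain ⟨Q, hQ, rfl⟩ := Finset.mem_image.mp (Finset.mem_coe.mp hy)
    have hPQ : P ≠ Q := fun h => hxy (by rw [h])
    exact (Finset.disjoint_image hf).mpr (π.disjoint hP hQ hPQ)
  sup_parts := by rw [sup_image_finset hf, π.sup_parts]
  bot_notMem := by
    simp only [Finset.bot_eq_empty, Finset.mem_image, not_exists, not_and]
    intro P hP h
    exact π.bot_notMem (by rwa [Finset.image_eq_empty.mp h] at hP)

@[simp] lemma mapFP_parts (hf : Function.Injective f) (π : Finpartition s) :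
    (mapFP hf π).parts = π.parts.image (Finset.image f) := rfl

lemma mapFP_parts_card (hf : Function.Injective f) (π : Finpartition s) :
    (mapFP hf π).parts.card = π.parts.card := by
  rw [mapFP_parts]
  exact Finset.card_image_of_injective _ (Finset.image_injective hf)

lemma mapFP_bot (hf : Function.Injective f) :
    mapFP hf (⊥ : Finpartition s) = ⊥ := by
  ext P
  rw [mapFP_parts]
  constructor
  · intro hP
    obtain ⟨Q, hQ, rfl⟩ := Finset.mem_image.mp hP
    obtain ⟨a, ha, rfl⟩ := Finpartition.mem_bot_iff.mp hQ
    rw [Finset.image_singleton]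
    exact Finpartition.mem_bot_iff.mpr ⟨f a, Finset.mem_image_of_mem f ha, rfl⟩
  · intro hP
    obtain ⟨b, hb, rfl⟩ := Finpartition.mem_bot_iff.mp hP
    obtain ⟨a, ha, rfl⟩ := Finset.mem_image.mp hb
    exact Finset.mem_image.mpr ⟨{a}, Finpartition.mem_bot_iff.mpr ⟨a, ha, rfl⟩,
      Finset.image_singleton f a⟩

lemma mapFP_le_iff (hf : Function.Injective f) {π σ : Finpartition s} :
    mapFP hf π ≤ mapFP hf σ ↔ π ≤ σ := by
  constructor
  · intro h P hP
    obtain ⟨Q', hQ', hsub⟩ := h (Finset.mem_image_of_mem _ hP)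
    obtain ⟨Q, hQ, rfl⟩ := Finset.mem_image.mp hQ'
    exact ⟨Q, hQ, (Finset.image_subset_image_iff hf).mp hsub⟩
  · intro h P' hP'
    obtain ⟨P, hP, rfl⟩ := Finset.mem_image.mp hP'
    obtain ⟨Q, hQ, hsub⟩ := h hP
    exact ⟨Q.image f, Finset.mem_image_of_mem _ hQ,
      (Finset.image_subset_image_iff hf).mpr hsub⟩

lemma mapFP_injective (hf : Function.Injective f) :
    Function.Injective (mapFP (s := s) hf) := by
  intro π σ h
  apply Finpartition.ext
  have := congrArg Finpartition.parts h
  rw [mapFP_parts, mapFP_parts] at this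
  exact Finset.image_injective (Finset.image_injective hf) this

lemma mapFP_lt_iff (hf : Function.Injective f) {π σ : Finpartition s} :
    mapFP hf π < mapFP hf σ ↔ π < σ := by
  rw [lt_iff_le_and_ne, lt_iff_le_and_ne, mapFP_le_iff hf]
  have : mapFP hf π ≠ mapFP hf σ ↔ π ≠ σ := (mapFP_injective hf).ne_iff
  rw [this]

open scoped Classical in
noncomputable def preFP (hf : Function.Injective f) (ρ : Finpartition (s.image f)) : Finpartition s where
  parts := ρ.parts.image (fun Q => Q.preimage f hf.injOn)
  supIndep := by
    rw [Finset.supIndep_iff_pairwiseDisjoint]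
    intro x hx y hy hxy
    obtain ⟨P, hP, rfl⟩ := Finset.mem_image.mp (Finset.mem_coe.mp hx)
    obtain ⟨Q, hQ, rfl⟩ := Finset.mem_image.mp (Finset.mem_coe.mp hy)
    have hPQ : P ≠ Q := fun h => hxy (by rw [h])
    have h2 := ρ.disjoint hP hQ hPQ
    exact Finset.disjoint_left.mpr (fun {a} ha1 ha2 =>
      Finset.disjoint_left.mp h2 (Finset.mem_preimage.mp ha1) (Finset.mem_preimage.mp ha2))
  sup_parts := by
    ext x
    simp only [Finset.mem_sup, Finset.mem_image, id]
    constructor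
    · rintro ⟨A, ⟨Q, hQ, rfl⟩, hx⟩
      rw [Finset.mem_preimage] at hx
      have : f x ∈ s.image f := ρ.le hQ hx
      obtain ⟨y, hy, hyx⟩ := Finset.mem_image.mp this
      rwa [← hf hyx]
    · intro hx
      obtain ⟨Q, hQ, hxQ⟩ := ρ.exists_mem (Finset.mem_image_of_mem f hx)
      exact ⟨Q.preimage f hf.injOn, ⟨Q, hQ, rfl⟩, Finset.mem_preimage.mpr hxQ⟩
  bot_notMem := by
    simp only [Finset.bot_eq_empty, Finset.mem_image, not_exists, not_and]
    intro Q hQ h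
    obtain ⟨y, hy⟩ := ρ.nonempty_of_mem_parts hQ
    obtain ⟨x, _, rfl⟩ := Finset.mem_image.mp (ρ.le hQ hy)
    have : x ∈ Q.preimage f hf.injOn := Finset.mem_preimage.mpr hy
    rw [h] at this
    exact absurd this (Finset.notMem_empty x)

open scoped Classical in
lemma mapFP_preFP (hf : Function.Injective f) (ρ : Finpartition (s.image f)) :
    mapFP hf (preFP hf ρ) = ρ := by
  apply Finpartition.ext
  rw [mapFP_parts]
  show (ρ.parts.image (fun Q => Q.preimage f hf.injOn)).image (Finset.image f) = ρ.parts
  rw [Finset.image_image]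
  have : ∀ Q ∈ ρ.parts, (Finset.image f ∘ fun Q => Q.preimage f hf.injOn) Q = Q := by
    intro Q hQ
    ext y
    simp only [Function.comp_apply, Finset.mem_image, Finset.mem_preimage]
    constructor
    · rintro ⟨x, hx, rfl⟩
      exact hx
    · intro hy
      obtain ⟨x, _, rfl⟩ := Finset.mem_image.mp (ρ.le hQ hy)
      exact ⟨x, hy, rfl⟩
  rw [Finset.image_congr this]
  simp

open scoped Classical in
lemma preFP_mapFP (hf : Function.Injective f) (π : Finpartition s) :
    preFP hf (mapFP hf π) = π :=
  mapFP_injective hf (mapFP_preFP hf (mapFP hf π))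

lemma zetaG_mapFP (w : ℕ → R) (hf : Function.Injective f) (τ σ : Finpartition s) :
    zetaG w (mapFP hf τ) (mapFP hf σ) = zetaG w τ σ := by
  unfold zetaG
  rw [mapFP_parts, Finset.prod_image (fun x hx y hy h =>
    Finset.image_injective hf h)]
  apply Finset.prod_congr rfl
  intro B hB
  congr 1
  rw [mapFP_parts, Finset.filter_image]
  rw [Finset.card_image_of_injective _ (Finset.image_injective hf)]
  congr 1
  apply Finset.filter_congr
  intro A hA
  simp [Finset.image_subset_image_iff hf]

open scoped Classical in
lemma muG_mapFP (w : ℕ → R) (hf : Function.Injective f) (π : Finpartition s) :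
    muG w (mapFP hf π) = muG w π := by
  induction π using WellFoundedLT.induction with
  | _ π ih =>
    rw [muG_def, muG_def]
    by_cases hπ : π = ⊥
    · rw [if_pos (by rw [hπ, mapFP_bot]), if_pos hπ]
    · have h1 : mapFP hf π ≠ ⊥ := by
        rw [← mapFP_bot hf]
        exact fun h => hπ (mapFP_injective hf h)
      rw [if_neg h1, if_neg hπ]
      congr 1
      rw [Finset.sum_attach _ (fun τ => muG w τ * zetaG w τ (mapFP hf π)),
        Finset.sum_attach _ (fun τ => muG w τ * zetaG w τ π)]
      refine Finset.sum_nbij' (fun ρ => preFP hf ρ) (fun τ => mapFP hf τ) ?_ ?_ ?_ ?_ ?_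
      · intro ρ hρ
        rw [Finset.mem_filter] at hρ ⊢
        refine ⟨Finset.mem_univ _, ?_⟩
        rw [← mapFP_lt_iff hf, mapFP_preFP]
        exact hρ.2
      · intro τ hτ
        rw [Finset.mem_filter] at hτ ⊢
        exact ⟨Finset.mem_univ _, (mapFP_lt_iff hf).mpr hτ.2⟩
      · intro ρ _
        exact mapFP_preFP hf ρ
      · intro τ _
        exact preFP_mapFP hf τ
      · intro ρ hρ
        have : ρ = mapFP hf (preFP hf ρ) := (mapFP_preFP hf ρ).symm
        conv_lhs => rw [this]
        rw [zetaG_mapFP, ih _ (by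
          rw [← mapFP_lt_iff hf, mapFP_preFP]
          exact (Finset.mem_filter.mp hρ).2)]

end MapFP

lemma copy_parts' {s s' : Finset α} (h : s = s') (π : Finpartition s) :
    (π.copy h).parts = π.parts := rfl

lemma muG_copy (w : ℕ → R) {s s' : Finset α} (h : s = s') (π : Finpartition s) :
    muG w (π.copy h) = muG w π := by
  subst h
  have : π.copy rfl = π := Finpartition.ext rfl
  rw [this]

lemma sup_sdiff_parts {s : Finset α} (π : Finpartition s) {S : Finset (Finset α)}
    (hS : S ⊆ π.parts) : (π.parts \ S).sup id = s \ S.sup id := by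
  ext x
  constructor
  · intro hx
    obtain ⟨P, hP, hxP⟩ := Finset.mem_sup.mp hx
    rw [Finset.mem_sdiff] at hP
    rw [Finset.mem_sdiff]
    refine ⟨π.le hP.1 hxP, fun hmem => ?_⟩
    obtain ⟨Q, hQ, hxQ⟩ := Finset.mem_sup.mp hmem
    have hQP : Q ≠ P := fun h => hP.2 (h ▸ hQ)
    exact Finset.disjoint_left.mp (π.disjoint (hS hQ) hP.1 hQP) hxQ hxP
  · intro hx
    rw [Finset.mem_sdiff] at hx
    obtain ⟨P, hP, hxP⟩ := π.exists_mem hx.1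
    have hPS : P ∉ S := fun h => hx.2 (Finset.mem_sup.mpr ⟨P, h, hxP⟩)
    exact Finset.mem_sup.mpr ⟨P, Finset.mem_sdiff.mpr ⟨hP, hPS⟩, hxP⟩

lemma sup_subset {s : Finset α} (π : Finpartition s) {S : Finset (Finset α)}
    (hS : S ⊆ π.parts) : S.sup id ⊆ s :=
  Finset.sup_le (fun P hP => π.le (hS hP))

/-- decomposition of a partition along a subset of its parts -/
lemma muG_split {w : ℕ → R} (hw : w 1 = 1) {s : Finset α} (π : Finpartition s)
    {S : Finset (Finset α)} (hS : S ⊆ π.parts) :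
    muG w π = muG w (π.ofSubset hS rfl) *
      muG w (π.ofSubset (Finset.sdiff_subset (s := π.parts) (t := S)) (sup_sdiff_parts π hS)) := by
  set T := S.sup id with hT
  have hdisj : Disjoint T (s \ T) := Finset.disjoint_sdiff
  have hTs : T ∪ (s \ T) = s := Finset.union_sdiff_of_subset (sup_subset π hS)
  have hun : (unionFP hdisj (π.ofSubset hS rfl)
      (π.ofSubset Finset.sdiff_subset (sup_sdiff_parts π hS))).copy hTs = π := by
    apply Finpartition.ext
    rw [copy_parts', unionFP_parts]
    show S ∪ (π.parts \ S) = π.parts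
    exact Finset.union_sdiff_of_subset hS
  calc muG w π = muG w ((unionFP hdisj (π.ofSubset hS rfl)
      (π.ofSubset Finset.sdiff_subset (sup_sdiff_parts π hS))).copy hTs) := by rw [hun]
    _ = _ := by rw [muG_copy, muG_unionFP hw]

noncomputable def bsumG (w : ℕ → R) (s : Finset α) (x : R) : R :=
  ∑ π : Finpartition s, muG w π * x ^ π.parts.card

lemma bsumG_empty (w : ℕ → R) (x : R) : bsumG w (∅ : Finset α) x = 1 := by
  unfold bsumG
  rw [← Finset.bot_eq_empty]
  rw [Finset.univ_unique, Finset.sum_singleton]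
  have h1 : (default : Finpartition (⊥ : Finset α)) = Finpartition.empty _ := rfl
  rw [h1]
  have h2 : (Finpartition.empty (Finset α) : Finpartition ⊥) = ⊥ := by
    apply Finpartition.ext
    simp [Finpartition.empty]
  rw [h2, muG_def, if_pos rfl]
  have h3 : (⊥ : Finpartition (⊥ : Finset α)).parts.card = 0 := by
    rw [Finpartition.card_bot]
    simp
  rw [h3]
  simp

lemma bsumG_image {β : Type*} [DecidableEq β] {f : α → β} (hf : Function.Injective f)
    (w : ℕ → R) (s : Finset α) (x : R) : bsumG w (s.image f) x = bsumG w s x := by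
  unfold bsumG
  refine Finset.sum_nbij' (fun ρ => preFP hf ρ) (fun π => mapFP hf π) ?_ ?_ ?_ ?_ ?_ <;>
    intro a _
  · exact Finset.mem_univ _
  · exact Finset.mem_univ _
  · exact mapFP_preFP hf a
  · exact preFP_mapFP hf a
  · conv_lhs => rw [← mapFP_preFP hf a]
    rw [muG_mapFP, mapFP_parts_card]

lemma sigA_ext {s : Finset α} {π π' : Finpartition s} {S S' : Finset (Finset α)}
    (h1 : π = π') (h2 : S = S') :
    (⟨π, S⟩ : (_ : Finpartition s) × Finset (Finset α)) = ⟨π', S'⟩ := by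
  subst h1; subst h2; rfl

lemma sigB_ext {s : Finset α} {T T' : Finset α} (h1 : T = T')
    {p : Finpartition T × Finpartition (s \ T)} {p' : Finpartition T' × Finpartition (s \ T')}
    (h2 : p.1.parts = p'.1.parts) (h3 : p.2.parts = p'.2.parts) :
    (⟨T, p⟩ : (T : Finset α) × (Finpartition T × Finpartition (s \ T))) = ⟨T', p'⟩ := by
  subst h1
  have : p = p' := Prod.ext (Finpartition.ext h2) (Finpartition.ext h3)
  rw [this]

def fwdSplit (s : Finset α) (a : (_ : Finpartition s) × Finset (Finset α))
    (ha : a ∈ (Finset.univ : Finset (Finpartition s)).sigma (fun π => π.parts.powerset)) :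
    (T : Finset α) × (Finpartition T × Finpartition (s \ T)) :=
  ⟨a.2.sup id,
    (a.1.ofSubset (Finset.mem_powerset.mp (Finset.mem_sigma.mp ha).2) rfl,
     a.1.ofSubset Finset.sdiff_subset
       (sup_sdiff_parts a.1 (Finset.mem_powerset.mp (Finset.mem_sigma.mp ha).2)))⟩

def bwdSplit (s : Finset α) (b : (T : Finset α) × (Finpartition T × Finpartition (s \ T)))
    (hb : b ∈ s.powerset.sigma
      (fun T => (Finset.univ : Finset (Finpartition T × Finpartition (s \ T))))) :
    (_ : Finpartition s) × Finset (Finset α) :=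
  ⟨(unionFP Finset.disjoint_sdiff b.2.1 b.2.2).copy
      (Finset.union_sdiff_of_subset (Finset.mem_powerset.mp (Finset.mem_sigma.mp hb).1)),
    b.2.1.parts⟩

set_option maxHeartbeats 2000000 in
lemma bsumG_add {w : ℕ → R} (hw : w 1 = 1) (s : Finset α) (u v : R) :
    bsumG w s (u + v) = ∑ T ∈ s.powerset, bsumG w T u * bsumG w (s \ T) v := by
  unfold bsumG
  have hpow : ∀ π : Finpartition s, (u + v) ^ π.parts.card
      = ∑ S ∈ π.parts.powerset, u ^ S.card * v ^ (π.parts \ S).card := by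
    intro π
    rw [← Finset.prod_const (b := u + v)]
    rw [Finset.prod_add (fun _ => u) (fun _ => v) π.parts]
    exact Finset.sum_congr rfl (fun S _ => by rw [Finset.prod_const, Finset.prod_const])
  calc ∑ π : Finpartition s, muG w π * (u + v) ^ π.parts.card
      = ∑ π : Finpartition s, ∑ S ∈ π.parts.powerset,
          muG w π * (u ^ S.card * v ^ (π.parts \ S).card) := by
        exact Finset.sum_congr rfl (fun π _ => by rw [hpow π, Finset.mul_sum])
    _ = ∑ p ∈ (Finset.univ : Finset (Finpartition s)).sigma (fun π => π.parts.powerset),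
          muG w p.1 * (u ^ p.2.card * v ^ (p.1.parts \ p.2).card) :=
        (Finset.sum_sigma (Finset.univ : Finset (Finpartition s)) (fun π => π.parts.powerset)
          (fun p => muG w p.1 * (u ^ p.2.card * v ^ (p.1.parts \ p.2).card))).symm
    _ = ∑ p ∈ s.powerset.sigma
          (fun T => (Finset.univ : Finset (Finpartition T × Finpartition (s \ T)))),
          (muG w p.2.1 * u ^ p.2.1.parts.card) * (muG w p.2.2 * v ^ p.2.2.parts.card) := by
        refine Finset.sum_bij' (fwdSplit s) (bwdSplit s) ?_ ?_ ?_ ?_ ?_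
        · intro a ha
          unfold fwdSplit
          rw [Finset.mem_sigma]
          exact ⟨Finset.mem_powerset.mpr (sup_subset a.1
            (Finset.mem_powerset.mp (Finset.mem_sigma.mp ha).2)), Finset.mem_univ _⟩
        · intro b hb
          unfold bwdSplit
          rw [Finset.mem_sigma]
          refine ⟨Finset.mem_univ _, Finset.mem_powerset.mpr ?_⟩
          rw [copy_parts', unionFP_parts]
          exact Finset.subset_union_left
        · intro a ha
          have hS := Finset.mem_powerset.mp (Finset.mem_sigma.mp ha).2
          unfold fwdSplit bwdSplit
          refine sigA_ext ?_ rfl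
          apply Finpartition.ext
          rw [copy_parts', unionFP_parts]
          exact Finset.union_sdiff_of_subset hS
        · intro b hb
          unfold fwdSplit bwdSplit
          refine sigB_ext b.2.1.sup_parts ?_ ?_
          · rfl
          · show ((unionFP Finset.disjoint_sdiff b.2.1 b.2.2).copy
                (Finset.union_sdiff_of_subset
                  (Finset.mem_powerset.mp (Finset.mem_sigma.mp hb).1))).parts \ b.2.1.parts
              = b.2.2.parts
            rw [copy_parts', unionFP_parts]
            exact Finset.union_sdiff_cancel_left
              (parts_disjoint Finset.disjoint_sdiff b.2.1 b.2.2)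
        · intro a ha
          have hS := Finset.mem_powerset.mp (Finset.mem_sigma.mp ha).2
          unfold fwdSplit
          rw [muG_split hw a.1 hS]
          simp only [Finpartition.ofSubset_parts]
          ring
    _ = ∑ T ∈ s.powerset, ∑ p : Finpartition T × Finpartition (s \ T),
          (muG w p.1 * u ^ p.1.parts.card) * (muG w p.2 * v ^ p.2.parts.card) :=
        Finset.sum_sigma s.powerset
          (fun T => (Finset.univ : Finset (Finpartition T × Finpartition (s \ T))))
          (fun p => (muG w p.2.1 * u ^ p.2.1.parts.card) * (muG w p.2.2 * v ^ p.2.2.parts.card))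
    _ = ∑ T ∈ s.powerset, (∑ π1 : Finpartition T, muG w π1 * u ^ π1.parts.card)
          * (∑ π2 : Finpartition (s \ T), muG w π2 * v ^ π2.parts.card) := by
        refine Finset.sum_congr rfl (fun T _ => ?_)
        rw [Fintype.sum_prod_type]
        dsimp only
        rw [← Finset.sum_mul_sum]

lemma bsumG_of_card (w : ℕ → R) {n i : ℕ} (T : Finset (Fin n)) (hT : T.card = i) (x : R) :
    bsumG w T x = bsumG w (Finset.univ : Finset (Fin i)) x := by
  let e := T.orderIsoOfFin hT
  let g : Fin i → Fin n := fun j => (e j : Fin n)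
  have hg : Function.Injective g := fun a b h => by
    apply e.injective
    exact Subtype.ext h
  have himg : (Finset.univ : Finset (Fin i)).image g = T := by
    ext b
    simp only [Finset.mem_image, Finset.mem_univ, true_and]
    constructor
    · rintro ⟨j, rfl⟩
      exact (e j).2
    · intro hb
      obtain ⟨j, hj⟩ := e.surjective ⟨b, hb⟩
      exact ⟨j, congrArg Subtype.val hj⟩
  rw [← himg, bsumG_image hg]

end General

lemma muW_eq_muG (w : ℕ → R) {n : ℕ} (σ : Finpartition (univ : Finset (Fin n))) :
    muW w ⊥ σ = muG w σ := by
  classical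
  induction σ using WellFoundedLT.induction with
  | _ σ ih =>
    rw [muW, muG_def]
    by_cases hσ : σ = ⊥
    · simp [hσ]
    · rw [if_neg (fun h => hσ h.symm), if_neg hσ]
      have hset : (Finset.univ.filter fun τ => ⊥ ≤ τ ∧ τ < σ)
          = (Finset.univ.filter fun τ : Finpartition (univ : Finset (Fin n)) => τ < σ) := by
        apply Finset.filter_congr
        intro τ _
        simp
      rw [hset]
      congr 1
      apply Finset.sum_congr rfl
      intro τ _
      rw [ih τ.1 (Finset.mem_filter.mp τ.2).2]
      rfl

lemma bEnum_eq_bsumG (w : ℕ → R) (n : ℕ) (x : R) :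
    bEnum w n x = bsumG w (Finset.univ : Finset (Fin n)) x := by
  by_cases hn : n = 0
  · subst hn
    rw [bEnum, if_pos rfl]
    have h : (Finset.univ : Finset (Fin 0)) = ∅ := by simp
    rw [show bsumG w (Finset.univ : Finset (Fin 0)) x = bsumG w (∅ : Finset (Fin 0)) x from
      by rw [h], bsumG_empty]
  · rw [bEnum, if_neg hn]
    unfold bsumG
    exact Finset.sum_congr rfl (fun π _ => by rw [muW_eq_muG])

/-- Theorem 3.4, part 1 (Möbius-type case): the Möbius-type enumerators are of binomial type. -/
theorem bEnum_binomial (w : ℕ → R) (hw : w 1 = 1) (n : ℕ) (u v : R) :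
    bEnum w n (u + v)
      = ∑ i ∈ Finset.range (n + 1), (n.choose i : R) * bEnum w i u * bEnum w (n - i) v := by
  classical
  rw [bEnum_eq_bsumG, bsumG_add hw]
  rw [Finset.powerset_card_disjiUnion]
  refine (Finset.sum_disjiUnion _ _ _).trans ?_
  have hcard : (Finset.univ : Finset (Fin n)).card = n := by simp
  rw [hcard]
  apply Finset.sum_congr rfl
  intro i hi
  have hstep : ∀ T ∈ Finset.powersetCard i (Finset.univ : Finset (Fin n)),
      bsumG w T u * bsumG w (Finset.univ \ T) v
        = bsumG w (Finset.univ : Finset (Fin i)) u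
          * bsumG w (Finset.univ : Finset (Fin (n - i))) v := by
    intro T hT
    obtain ⟨-, hTc⟩ := Finset.mem_powersetCard.mp hT
    rw [bsumG_of_card w T hTc, bsumG_of_card w (i := n - i) (Finset.univ \ T) (by
      rw [Finset.card_sdiff_of_subset (Finset.subset_univ T), hcard, hTc])]
  rw [Finset.sum_congr rfl hstep, Finset.sum_const, Finset.card_powersetCard, hcard]
  rw [nsmul_eq_mul]
  rw [← bEnum_eq_bsumG, ← bEnum_eq_bsumG, mul_assoc]
end

section
/- Define the linear operator Λ on R[x] by Λp = Σ_{k ≥ 1} (w(k)/k!) · D^k p, where D is formal differentiation (the sum is finite on each polynomial). Then the Möbius-type enumerators form the basic sequence of Λ: b_n(0; w) = 0 for every n ≥ 1, and Λ(b_n(x; w)) = n · b_{n−1}(x; w) for every n ≥ 1. (Theorem 3.4, part 2, basic-sequence statement.) -/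
open Finset

variable {R : Type*} [CommRing R] [Algebra ℚ R]

/-- The Möbius-type enumerator `b_n(x; w)` as a polynomial:  `b_0 = 1` and
`b_n(x; w) = ∑_{π ∈ Π_n} µ^w(0̂, π) x^{|π|}` for `n ≥ 1`. -/
noncomputable def bPoly (w : ℕ → R) (n : ℕ) : Polynomial R :=
  if n = 0 then 1 else
    ∑ π : Finpartition (univ : Finset (Fin n)),
      Polynomial.C (muW w ⊥ π) * Polynomial.X ^ π.parts.card

/-- The operator `p ↦ ∑_{k ≥ 1} (c k / k!) D^k p` on `R[x]`, where `D` is formal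
differentiation; the sum is finite on each polynomial since `D^k p = 0` for
`k > deg p`. -/
noncomputable def opOf (c : ℕ → R) (p : Polynomial R) : Polynomial R :=
  ∑ k ∈ Finset.Icc 1 p.natDegree,
    (algebraMap ℚ R (1 / k.factorial) * c k) • (Polynomial.derivative^[k] p)

/-! ### Auxiliary development -/

open Polynomial
open scoped Classical

section Aux

variable {α β : Type*} [DecidableEq α] [DecidableEq β] {s : Finset α} {t : Finset β}

/-- Transport of a finpartition along a map injective on the ground set. -/
noncomputable def Finpartition.mapOn (f : α → β) (hf : Set.InjOn f ↑s) (hft : s.image f = t)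
    (σ : Finpartition s) : Finpartition t where
  parts := σ.parts.image (Finset.image f)
  supIndep := by
    rw [Finset.supIndep_iff_pairwiseDisjoint]
    rintro B₁ hB₁ B₂ hB₂ hne
    simp only [coe_image, Set.mem_image, mem_coe] at hB₁ hB₂
    obtain ⟨A₁, hA₁, rfl⟩ := hB₁
    obtain ⟨A₂, hA₂, rfl⟩ := hB₂
    have hA : A₁ ≠ A₂ := by rintro rfl; exact hne rfl
    have hd := σ.disjoint hA₁ hA₂ hA
    rw [Function.onFun, Finset.disjoint_left] at hd ⊢
    rintro y hy₁ hy₂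
    simp only [Finset.mem_image, id] at hy₁ hy₂
    obtain ⟨a₁, ha₁, rfl⟩ := hy₁
    obtain ⟨a₂, ha₂, hEq⟩ := hy₂
    have : a₂ = a₁ := hf (σ.le hA₂ ha₂) (σ.le hA₁ ha₁) hEq
    exact hd ha₁ (this ▸ ha₂)
  sup_parts := by
    subst hft
    ext x
    rw [Finset.mem_sup]
    constructor
    · rintro ⟨B, hB, hx⟩
      obtain ⟨A, hA, rfl⟩ := Finset.mem_image.mp hB
      obtain ⟨a, ha, rfl⟩ := Finset.mem_image.mp hx
      exact Finset.mem_image_of_mem f (σ.le hA ha)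
    · intro hx
      obtain ⟨a, ha, rfl⟩ := Finset.mem_image.mp hx
      obtain ⟨A, hA, haA⟩ := σ.exists_mem ha
      exact ⟨A.image f, Finset.mem_image_of_mem _ hA, Finset.mem_image_of_mem _ haA⟩
  bot_notMem := by
    intro h
    simp only [Finset.bot_eq_empty, Finset.mem_image] at h
    obtain ⟨A, hA, hAe⟩ := h
    exact σ.ne_bot hA (by simpa [Finset.image_eq_empty] using hAe)

lemma Finpartition.mapOn_parts (f : α → β) (hf : Set.InjOn f ↑s) (hft : s.image f = t)
    (σ : Finpartition s) : (σ.mapOn f hf hft).parts = σ.parts.image (Finset.image f) := rfl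

/-- The weighted Bell-type polynomial over partitions of an arbitrary finset. -/
noncomputable def apPoly (w : ℕ → R) (s : Finset α) : Polynomial R :=
  ∑ σ : Finpartition s, Polynomial.C (∏ B ∈ σ.parts, w B.card) * Polynomial.X ^ σ.parts.card

lemma image_injOn_parts {f : α → β} (hf : Set.InjOn f ↑s) (σ : Finpartition s) :
    Set.InjOn (Finset.image f) ↑σ.parts := by
  intro A₁ h₁ A₂ h₂ hEq
  ext a
  constructor
  · intro ha
    have : f a ∈ A₂.image f := hEq ▸ Finset.mem_image_of_mem f ha
    obtain ⟨a', ha', hfa⟩ := Finset.mem_image.mp this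
    rwa [hf (σ.le h₂ ha') (σ.le h₁ ha) hfa] at ha'
  · intro ha
    have : f a ∈ A₁.image f := hEq ▸ Finset.mem_image_of_mem f ha
    obtain ⟨a', ha', hfa⟩ := Finset.mem_image.mp this
    rwa [hf (σ.le h₁ ha') (σ.le h₂ ha) hfa] at ha'

lemma mapOn_parts_card {f : α → β} (hf : Set.InjOn f ↑s) (hft : s.image f = t)
    (σ : Finpartition s) : (σ.mapOn f hf hft).parts.card = σ.parts.card := by
  rw [Finpartition.mapOn_parts]
  exact Finset.card_image_of_injOn (image_injOn_parts hf σ)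

lemma mapOn_prod (w : ℕ → R) {f : α → β} (hf : Set.InjOn f ↑s) (hft : s.image f = t)
    (σ : Finpartition s) :
    ∏ B ∈ (σ.mapOn f hf hft).parts, w B.card = ∏ A ∈ σ.parts, w A.card := by
  rw [Finpartition.mapOn_parts, Finset.prod_image (image_injOn_parts hf σ)]
  refine Finset.prod_congr rfl fun A hA => ?_
  rw [Finset.card_image_of_injOn (hf.mono (σ.le hA))]

lemma mapOn_mapOn {f : α → β} {g : β → α} (hf : Set.InjOn f ↑s) (hg : Set.InjOn g ↑t)
    (hft : s.image f = t) (hgt : t.image g = s) (hcomp : ∀ a ∈ s, g (f a) = a)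
    (σ : Finpartition s) : (σ.mapOn f hf hft).mapOn g hg hgt = σ := by
  apply Finpartition.ext
  rw [Finpartition.mapOn_parts, Finpartition.mapOn_parts, Finset.image_image]
  have h1 : Set.EqOn (Finset.image g ∘ Finset.image f) id ↑σ.parts := by
    intro A hA
    simp only [Function.comp_apply, id, Finset.image_image]
    have h2 : Set.EqOn (g ∘ f) id ↑A := fun a ha => hcomp a (σ.le hA ha)
    exact (Finset.image_congr h2).trans Finset.image_id
  exact (Finset.image_congr h1).trans Finset.image_id

lemma apPoly_empty {γ : Type*} [DecidableEq γ] (w : ℕ → R) : apPoly w (∅ : Finset γ) = 1 := by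
  haveI : Subsingleton (Finpartition (∅ : Finset γ)) :=
    ⟨fun a b => Finpartition.ext (by
      rw [Finpartition.parts_eq_empty_iff.mpr Finset.bot_eq_empty.symm,
        Finpartition.parts_eq_empty_iff.mpr Finset.bot_eq_empty.symm])⟩
  haveI : Unique (Finpartition (∅ : Finset γ)) := uniqueOfSubsingleton ⊥
  rw [apPoly, Fintype.sum_unique]
  have hparts : (default : Finpartition (∅ : Finset γ)).parts = ∅ :=
    Finpartition.parts_eq_empty_iff.mpr Finset.bot_eq_empty.symm
  rw [hparts]
  simp

lemma apPoly_congr (w : ℕ → R) (s : Finset α) (t : Finset β) (h : s.card = t.card) :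
    apPoly w s = apPoly w t := by
  rcases Finset.eq_empty_or_nonempty s with rfl | hs
  · have ht : t = ∅ := by rw [← Finset.card_eq_zero, ← h]; simp
    subst ht
    rw [apPoly_empty, apPoly_empty]
  · have ht : t.Nonempty := by rw [← Finset.card_pos, ← h, Finset.card_pos]; exact hs
    have e : {x // x ∈ s} ≃ {x // x ∈ t} := Finset.equivOfCardEq h
    set f : α → β := fun a => if ha : a ∈ s then (e ⟨a, ha⟩ : β) else (e ⟨hs.choose, hs.choose_spec⟩ : β) with hf_def
    set g : β → α := fun b => if hb : b ∈ t then (e.symm ⟨b, hb⟩ : α) else hs.choose with hg_def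
    have hfs : ∀ a (ha : a ∈ s), f a = (e ⟨a, ha⟩ : β) := fun a ha => dif_pos ha
    have hgs : ∀ b (hb : b ∈ t), g b = (e.symm ⟨b, hb⟩ : α) := fun b hb => dif_pos hb
    have hft' : ∀ a (ha : a ∈ s), f a ∈ t := fun a ha => by rw [hfs a ha]; exact (e ⟨a, ha⟩).2
    have hgs' : ∀ b (hb : b ∈ t), g b ∈ s := fun b hb => by rw [hgs b hb]; exact (e.symm ⟨b, hb⟩).2
    have hgf : ∀ a ∈ s, g (f a) = a := by
      intro a ha
      rw [hfs a ha, hgs _ ((e ⟨a, ha⟩).2)]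
      simp
    have hfg : ∀ b ∈ t, f (g b) = b := by
      intro b hb
      rw [hgs b hb, hfs _ ((e.symm ⟨b, hb⟩).2)]
      simp
    have hf_inj : Set.InjOn f ↑s := fun a₁ h₁ a₂ h₂ hEq => by
      rw [← hgf a₁ h₁, ← hgf a₂ h₂, hEq]
    have hg_inj : Set.InjOn g ↑t := fun b₁ h₁ b₂ h₂ hEq => by
      rw [← hfg b₁ h₁, ← hfg b₂ h₂, hEq]
    have hf_img : s.image f = t := by
      apply Finset.Subset.antisymm
      · intro b hb
        obtain ⟨a, ha, rfl⟩ := Finset.mem_image.mp hb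
        exact hft' a ha
      · intro b hb
        exact Finset.mem_image.mpr ⟨g b, hgs' b hb, hfg b hb⟩
    have hg_img : t.image g = s := by
      apply Finset.Subset.antisymm
      · intro a ha
        obtain ⟨b, hb, rfl⟩ := Finset.mem_image.mp ha
        exact hgs' b hb
      · intro a ha
        exact Finset.mem_image.mpr ⟨f a, hft' a ha, hgf a ha⟩
    rw [apPoly, apPoly]
    refine Finset.sum_nbij' (i := fun σ => σ.mapOn f hf_inj hf_img)
      (j := fun ρ => ρ.mapOn g hg_inj hg_img) (fun a _ => Finset.mem_univ _)
      (fun a _ => Finset.mem_univ _) ?_ ?_ ?_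
    · intro σ _
      exact mapOn_mapOn hf_inj hg_inj hf_img hg_img hgf σ
    · intro ρ _
      exact mapOn_mapOn hg_inj hf_inj hg_img hf_img hfg ρ
    · intro σ _
      rw [mapOn_prod, mapOn_parts_card]

/-- `a_m`. -/
noncomputable def aPoly (w : ℕ → R) (m : ℕ) : Polynomial R :=
  apPoly w (univ : Finset (Fin m))

lemma parts_card_eq_iff (σ : Finpartition s) : σ.parts.card = s.card ↔ σ = ⊥ := by
  constructor
  · intro h
    have h1 : ∀ B ∈ σ.parts, (1 : ℕ) ≤ B.card := fun B hB =>
      Finset.card_pos.mpr (σ.nonempty_of_mem_parts hB)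
    have hsum : ∑ B ∈ σ.parts, (1 : ℕ) = ∑ B ∈ σ.parts, B.card := by
      rw [σ.sum_card_parts, Finset.sum_const, smul_eq_mul, mul_one, h]
    have hall := (Finset.sum_eq_sum_iff_of_le h1).mp hsum
    apply Finpartition.ext
    ext B
    rw [Finpartition.mem_bot_iff]
    constructor
    · intro hB
      obtain ⟨a, rfl⟩ := Finset.card_eq_one.mp (hall B hB).symm
      exact ⟨a, σ.le hB (Finset.mem_singleton_self a), rfl⟩
    · rintro ⟨a, has, rfl⟩
      obtain ⟨A, hA, haA⟩ := σ.exists_mem has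
      obtain ⟨b, rfl⟩ := Finset.card_eq_one.mp (hall A hA).symm
      rw [Finset.mem_singleton] at haA
      subst haA
      exact hA
  · rintro rfl
    exact Finpartition.card_bot s

lemma natDegree_apPoly_le (w : ℕ → R) (s : Finset α) : (apPoly w s).natDegree ≤ s.card := by
  refine Polynomial.natDegree_sum_le_of_forall_le _ _ fun σ _ => ?_
  exact le_trans (Polynomial.natDegree_C_mul_le _ _)
    (le_trans (Polynomial.natDegree_X_pow_le _) σ.card_parts_le_card)

lemma prod_parts_bot (w : ℕ → R) (hw : w 1 = 1) (s : Finset α) :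
    ∏ B ∈ (⊥ : Finpartition s).parts, w B.card = 1 := by
  rw [Finpartition.parts_bot, Finset.prod_map]
  refine Finset.prod_eq_one fun a _ => ?_
  simpa using hw

lemma coeff_apPoly_card (w : ℕ → R) (hw : w 1 = 1) (s : Finset α) :
    (apPoly w s).coeff s.card = 1 := by
  rw [apPoly, Polynomial.finset_sum_coeff]
  rw [Finset.sum_eq_single (⊥ : Finpartition s)]
  · rw [Polynomial.coeff_C_mul, Polynomial.coeff_X_pow, if_pos (Finpartition.card_bot s).symm,
      mul_one, prod_parts_bot w hw]
  · intro σ _ hσ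
    rw [Polynomial.coeff_C_mul, Polynomial.coeff_X_pow,
      if_neg (fun hc => hσ ((parts_card_eq_iff σ).mp hc.symm)), mul_zero]
  · intro h
    exact absurd (Finset.mem_univ _) h

lemma natDegree_aPoly_le (w : ℕ → R) (m : ℕ) : (aPoly w m).natDegree ≤ m := by
  simpa [aPoly] using natDegree_apPoly_le w (univ : Finset (Fin m))

lemma coeff_aPoly (w : ℕ → R) (hw : w 1 = 1) (m : ℕ) : (aPoly w m).coeff m = 1 := by
  simpa [aPoly] using coeff_apPoly_card w hw (univ : Finset (Fin m))

section Quot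

variable {n : ℕ} (τ : Finpartition (univ : Finset (Fin n)))

lemma subset_of_mem_inter {σ : Finpartition (univ : Finset (Fin n))} (hτσ : τ ≤ σ)
    {A C : Finset (Fin n)} (hA : A ∈ τ.parts) (hC : C ∈ σ.parts) {x : Fin n}
    (hxA : x ∈ A) (hxC : x ∈ C) : A ⊆ C := by
  obtain ⟨C', hC', hsub⟩ := hτσ hA
  have : C' = C := σ.eq_of_mem_parts hC' hC (hsub hxA) hxC
  rwa [this] at hsub

lemma part_eq_sup_filter {σ : Finpartition (univ : Finset (Fin n))} (hτσ : τ ≤ σ)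
    {C : Finset (Fin n)} (hC : C ∈ σ.parts) :
    C = (τ.parts.filter fun A => A ⊆ C).sup id := by
  ext x
  constructor
  · intro hx
    have hxu : x ∈ (univ : Finset (Fin n)) := Finset.mem_univ x
    refine Finset.mem_sup.mpr ⟨τ.part x, Finset.mem_filter.mpr ⟨τ.part_mem.mpr hxu, ?_⟩,
      τ.mem_part hxu⟩
    exact subset_of_mem_inter τ hτσ (τ.part_mem.mpr hxu) hC (τ.mem_part hxu) hx
  · intro hx
    obtain ⟨A, hA, hxA⟩ := Finset.mem_sup.mp hx
    exact (Finset.mem_filter.mp hA).2 hxA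

lemma filter_injOn {σ : Finpartition (univ : Finset (Fin n))} (hτσ : τ ≤ σ) :
    Set.InjOn (fun C => τ.parts.filter fun A => A ⊆ C) ↑σ.parts := by
  intro C₁ h₁ C₂ h₂ hEq
  rw [part_eq_sup_filter τ hτσ h₁, part_eq_sup_filter τ hτσ h₂]
  simp only at hEq
  rw [hEq]

lemma filter_nonempty {σ : Finpartition (univ : Finset (Fin n))} (hτσ : τ ≤ σ)
    {C : Finset (Fin n)} (hC : C ∈ σ.parts) :
    (τ.parts.filter fun A => A ⊆ C).Nonempty := by
  obtain ⟨x, hx⟩ := σ.nonempty_of_mem_parts hC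
  exact ⟨τ.part x, Finset.mem_filter.mpr ⟨τ.part_mem.mpr (Finset.mem_univ x),
    subset_of_mem_inter τ hτσ (τ.part_mem.mpr (Finset.mem_univ x)) hC (τ.mem_part (Finset.mem_univ x)) hx⟩⟩

/-- The quotient of `σ ≥ τ` by `τ`: a finpartition of the set of parts of `τ`. -/
noncomputable def quotPart (σ : Finpartition (univ : Finset (Fin n))) (hτσ : τ ≤ σ) :
    Finpartition τ.parts where
  parts := σ.parts.image fun C => τ.parts.filter fun A => A ⊆ C
  supIndep := by
    rw [Finset.supIndep_iff_pairwiseDisjoint]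
    rintro B₁ hB₁ B₂ hB₂ hne
    simp only [coe_image, Set.mem_image, mem_coe] at hB₁ hB₂
    obtain ⟨C₁, hC₁, rfl⟩ := hB₁
    obtain ⟨C₂, hC₂, rfl⟩ := hB₂
    rw [Function.onFun, Finset.disjoint_left]
    intro A hA₁ hA₂
    simp only [id, Finset.mem_filter] at hA₁ hA₂
    obtain ⟨x, hx⟩ := τ.nonempty_of_mem_parts hA₁.1
    exact hne (by rw [σ.eq_of_mem_parts hC₁ hC₂ (hA₁.2 hx) (hA₂.2 hx)])
  sup_parts := by
    ext A
    rw [Finset.mem_sup]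
    constructor
    · rintro ⟨B, hB, hA⟩
      obtain ⟨C, hC, rfl⟩ := Finset.mem_image.mp hB
      exact (Finset.mem_filter.mp hA).1
    · intro hA
      obtain ⟨C, hC, hsub⟩ := hτσ hA
      exact ⟨_, Finset.mem_image_of_mem _ hC, Finset.mem_filter.mpr ⟨hA, hsub⟩⟩
  bot_notMem := by
    intro h
    obtain ⟨C, hC, hCe⟩ := Finset.mem_image.mp h
    obtain ⟨A, hA⟩ := filter_nonempty τ hτσ hC
    rw [hCe] at hA
    exact absurd hA (Finset.notMem_empty A)

lemma quotPart_parts_card (σ : Finpartition (univ : Finset (Fin n))) (hτσ : τ ≤ σ) :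
    (quotPart τ σ hτσ).parts.card = σ.parts.card :=
  Finset.card_image_of_injOn (filter_injOn τ hτσ)

lemma quotPart_prod (w : ℕ → R) (σ : Finpartition (univ : Finset (Fin n))) (hτσ : τ ≤ σ) :
    ∏ P ∈ (quotPart τ σ hτσ).parts, w P.card = zetaRel w τ σ := by
  rw [zetaRel]
  exact Finset.prod_image (filter_injOn τ hτσ)

/-- The join of a finpartition of the parts of `τ`: a finpartition of the ground set. -/
noncomputable def joinPart (ρ : Finpartition τ.parts) : Finpartition (univ : Finset (Fin n)) where
  parts := ρ.parts.image fun P => P.sup id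
  supIndep := by
    rw [Finset.supIndep_iff_pairwiseDisjoint]
    rintro B₁ hB₁ B₂ hB₂ hne
    simp only [coe_image, Set.mem_image, mem_coe] at hB₁ hB₂
    obtain ⟨P₁, hP₁, rfl⟩ := hB₁
    obtain ⟨P₂, hP₂, rfl⟩ := hB₂
    rw [Function.onFun, Finset.disjoint_left]
    intro x hx₁ hx₂
    simp only [id] at hx₁ hx₂
    obtain ⟨A₁, hA₁, hxA₁⟩ := Finset.mem_sup.mp hx₁
    obtain ⟨A₂, hA₂, hxA₂⟩ := Finset.mem_sup.mp hx₂
    have hP : P₁ ≠ P₂ := fun h => hne (by rw [h])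
    have hd := ρ.disjoint hP₁ hP₂ hP
    rw [Function.onFun, Finset.disjoint_left] at hd
    have : A₁ = A₂ := τ.eq_of_mem_parts (ρ.le hP₁ hA₁) (ρ.le hP₂ hA₂) hxA₁ hxA₂
    exact hd hA₁ (this ▸ hA₂)
  sup_parts := by
    apply Finset.Subset.antisymm
    · intro x _
      exact Finset.mem_univ x
    · intro x _
      have hxu : x ∈ (univ : Finset (Fin n)) := Finset.mem_univ x
      obtain ⟨P, hP, hAP⟩ := ρ.exists_mem (τ.part_mem.mpr hxu)
      rw [Finset.mem_sup]
      exact ⟨P.sup id, Finset.mem_image_of_mem _ hP,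
        Finset.mem_sup.mpr ⟨τ.part x, hAP, τ.mem_part hxu⟩⟩
  bot_notMem := by
    intro h
    obtain ⟨P, hP, hPe⟩ := Finset.mem_image.mp h
    obtain ⟨A, hA⟩ := ρ.nonempty_of_mem_parts hP
    obtain ⟨x, hx⟩ := τ.nonempty_of_mem_parts (ρ.le hP hA)
    have : x ∈ P.sup id := Finset.mem_sup.mpr ⟨A, hA, hx⟩
    rw [hPe] at this
    exact absurd this (Finset.notMem_empty x)

lemma le_joinPart (ρ : Finpartition τ.parts) : τ ≤ joinPart τ ρ := by
  intro A hA
  obtain ⟨P, hP, hAP⟩ := ρ.exists_mem hA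
  refine ⟨P.sup id, Finset.mem_image_of_mem _ hP, ?_⟩
  intro x hx
  exact Finset.mem_sup.mpr ⟨A, hAP, hx⟩

lemma filter_sup_eq (ρ : Finpartition τ.parts) {P : Finset (Finset (Fin n))} (hP : P ∈ ρ.parts) :
    (τ.parts.filter fun A => A ⊆ P.sup id) = P := by
  ext A
  rw [Finset.mem_filter]
  constructor
  · rintro ⟨hA, hsub⟩
    obtain ⟨x, hx⟩ := τ.nonempty_of_mem_parts hA
    obtain ⟨A', hA', hxA'⟩ := Finset.mem_sup.mp (hsub hx)
    have : A = A' := τ.eq_of_mem_parts hA (ρ.le hP hA') hx hxA'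
    exact this ▸ hA'
  · intro hA
    exact ⟨ρ.le hP hA, fun x hx => Finset.mem_sup.mpr ⟨A, hA, hx⟩⟩

lemma quotPart_joinPart (ρ : Finpartition τ.parts) :
    quotPart τ (joinPart τ ρ) (le_joinPart τ ρ) = ρ := by
  apply Finpartition.ext
  show (ρ.parts.image fun P => P.sup id).image (fun C => τ.parts.filter fun A => A ⊆ C) = ρ.parts
  rw [Finset.image_image]
  have h1 : Set.EqOn ((fun C => τ.parts.filter fun A => A ⊆ C) ∘ fun P => P.sup id) id
      ↑ρ.parts := by
    intro P hP
    exact filter_sup_eq τ ρ hP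
  exact (Finset.image_congr h1).trans Finset.image_id

lemma joinPart_quotPart (σ : Finpartition (univ : Finset (Fin n))) (hτσ : τ ≤ σ) :
    joinPart τ (quotPart τ σ hτσ) = σ := by
  apply Finpartition.ext
  show (σ.parts.image fun C => τ.parts.filter fun A => A ⊆ C).image (fun P => P.sup id) = σ.parts
  rw [Finset.image_image]
  have h1 : Set.EqOn ((fun P => P.sup id) ∘ fun C => τ.parts.filter fun A => A ⊆ C) id
      ↑σ.parts := by
    intro C hC
    exact ((part_eq_sup_filter τ hτσ hC).symm : _)
  exact (Finset.image_congr h1).trans Finset.image_id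

/-- The quotient lemma: summing the zeta weights over `σ ≥ τ` gives the Bell-type
polynomial on the set of blocks of `τ`. -/
lemma sum_zeta_eq_apPoly (w : ℕ → R) (τ : Finpartition (univ : Finset (Fin n))) :
    ∑ σ ∈ univ.filter (fun σ : Finpartition (univ : Finset (Fin n)) => τ ≤ σ),
      Polynomial.C (zetaRel w τ σ) * Polynomial.X ^ σ.parts.card = apPoly w τ.parts := by
  rw [apPoly]
  refine Finset.sum_nbij'
    (i := fun σ => if h : τ ≤ σ then quotPart τ σ h else ⊥)
    (j := fun ρ => joinPart τ ρ) (fun σ _ => Finset.mem_univ _) ?_ ?_ ?_ ?_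
  · intro ρ _
    simp only [Finset.mem_filter, Finset.mem_univ, true_and]
    exact le_joinPart τ ρ
  · intro σ hσ
    have hτσ : τ ≤ σ := (Finset.mem_filter.mp hσ).2
    rw [dif_pos hτσ]
    exact joinPart_quotPart τ σ hτσ
  · intro ρ _
    rw [dif_pos (le_joinPart τ ρ)]
    exact quotPart_joinPart τ ρ
  · intro σ hσ
    have hτσ : τ ≤ σ := (Finset.mem_filter.mp hσ).2
    rw [dif_pos hτσ, quotPart_prod τ w σ hτσ, quotPart_parts_card τ σ hτσ]

end Quot

lemma avoid_parts_of_mem (σ : Finpartition s) {B : Finset α} (hB : B ∈ σ.parts) :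
    (σ.avoid B).parts = σ.parts.erase B := by
  ext C
  rw [Finpartition.mem_avoid, Finset.mem_erase]
  constructor
  · rintro ⟨d, hd, hdB, rfl⟩
    have hne : d ≠ B := fun h => hdB (h ▸ le_rfl)
    have hdisj : Disjoint d B := σ.disjoint hd hB hne
    rw [Finset.sdiff_eq_self_of_disjoint hdisj]
    exact ⟨hne, hd⟩
  · rintro ⟨hne, hC⟩
    have hdisj : Disjoint C B := σ.disjoint hC hB hne
    refine ⟨C, hC, ?_, Finset.sdiff_eq_self_of_disjoint hdisj⟩
    intro hle
    obtain ⟨x, hx⟩ := σ.nonempty_of_mem_parts hC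
    exact (Finset.disjoint_left.mp hdisj hx) (hle hx)

/-- The marked-block recursion for the Bell-type polynomials. -/
lemma derivative_aPoly (w : ℕ → R) (n : ℕ) :
    Polynomial.derivative (aPoly w n) =
      ∑ k ∈ Finset.Icc 1 n, Polynomial.C (w k * (n.choose k : R)) * aPoly w (n - k) := by
  have hcardu : (univ : Finset (Fin n)).card = n := by
    rw [Finset.card_univ, Fintype.card_fin]
  have step1 : Polynomial.derivative (aPoly w n) =
      ∑ σ : Finpartition (univ : Finset (Fin n)), ∑ B ∈ σ.parts,
        Polynomial.C (∏ A ∈ σ.parts, w A.card) * Polynomial.X ^ (σ.parts.card - 1) := by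
    rw [aPoly, apPoly, map_sum]
    refine Finset.sum_congr rfl fun σ _ => ?_
    rw [Polynomial.derivative_C_mul, Polynomial.derivative_X_pow, Finset.sum_const,
      nsmul_eq_mul, Polynomial.C_eq_natCast]
    ring
  have hBne : ∀ {B : Finset (Fin n)}, B.Nonempty → B ≠ ⊥ := by
    intro B h
    rw [Finset.bot_eq_empty]
    exact h.ne_empty
  have hBsup : ∀ B : Finset (Fin n), (univ \ B) ⊔ B = univ := fun B =>
    sdiff_sup_cancel (Finset.le_iff_subset.mpr (Finset.subset_univ B))
  have step2 : (∑ σ : Finpartition (univ : Finset (Fin n)), ∑ B ∈ σ.parts,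
        Polynomial.C (∏ A ∈ σ.parts, w A.card) * Polynomial.X ^ (σ.parts.card - 1)) =
      ∑ B ∈ univ.filter (fun B : Finset (Fin n) => B.Nonempty),
        Polynomial.C (w B.card) * apPoly w ((univ : Finset (Fin n)) \ B) := by
    have rhs : ∀ B : Finset (Fin n),
        Polynomial.C (w B.card) * apPoly w ((univ : Finset (Fin n)) \ B) =
        ∑ ρ : Finpartition ((univ : Finset (Fin n)) \ B),
          Polynomial.C (w B.card * ∏ A ∈ ρ.parts, w A.card) * Polynomial.X ^ ρ.parts.card := by
      intro B
      rw [apPoly, Finset.mul_sum]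
      refine Finset.sum_congr rfl fun ρ _ => ?_
      rw [Polynomial.C_mul, mul_assoc]
    rw [Finset.sum_congr rfl (fun B _ => rhs B)]
    rw [Finset.sum_sigma', Finset.sum_sigma']
    refine Finset.sum_nbij'
      (i := fun x => ⟨x.2, x.1.avoid x.2⟩)
      (j := fun y => if h : y.1.Nonempty then
        ⟨(y.2).extend (hBne h) sdiff_disjoint (hBsup y.1), y.1⟩ else ⟨⊥, ∅⟩) ?_ ?_ ?_ ?_ ?_
    · rintro ⟨σ, B⟩ hx
      rw [Finset.mem_sigma] at hx ⊢
      refine ⟨Finset.mem_filter.mpr ⟨Finset.mem_univ _, σ.nonempty_of_mem_parts hx.2⟩,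
        Finset.mem_univ _⟩
    · rintro ⟨B, ρ⟩ hy
      rw [Finset.mem_sigma] at hy
      have hne : B.Nonempty := (Finset.mem_filter.mp hy.1).2
      dsimp only
      rw [dif_pos hne]
      rw [Finset.mem_sigma]
      refine ⟨Finset.mem_univ _, ?_⟩
      rw [Finpartition.extend_parts]
      exact Finset.mem_insert_self _ _
    · rintro ⟨σ, B⟩ hx
      rw [Finset.mem_sigma] at hx
      have hB : B ∈ σ.parts := hx.2
      have hne : B.Nonempty := σ.nonempty_of_mem_parts hB
      dsimp only
      rw [dif_pos hne]
      have hext : (σ.avoid B).extend (hBne hne) sdiff_disjoint (hBsup B) = σ := by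
        apply Finpartition.ext
        rw [Finpartition.extend_parts, avoid_parts_of_mem σ hB, Finset.insert_erase hB]
      rw [hext]
    · rintro ⟨B, ρ⟩ hy
      rw [Finset.mem_sigma] at hy
      have hne : B.Nonempty := (Finset.mem_filter.mp hy.1).2
      dsimp only
      rw [dif_pos hne]
      have hBnotin : B ∉ ρ.parts := by
        intro hmem
        obtain ⟨x, hx⟩ := hne
        have := ρ.le hmem hx
        rw [Finset.mem_sdiff] at this
        exact this.2 hx
      have havoid : ((ρ.extend (hBne hne) sdiff_disjoint (hBsup B)).avoid B) = ρ := by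
        apply Finpartition.ext
        rw [avoid_parts_of_mem _ (by rw [Finpartition.extend_parts]; exact Finset.mem_insert_self _ _),
          Finpartition.extend_parts, Finset.erase_insert hBnotin]
      rw [havoid]
    · rintro ⟨σ, B⟩ hx
      rw [Finset.mem_sigma] at hx
      have hB : B ∈ σ.parts := hx.2
      dsimp only
      rw [avoid_parts_of_mem σ hB, Finset.card_erase_of_mem hB,
        ← Finset.mul_prod_erase _ _ hB]
  rw [step1, step2]
  rw [← Finset.sum_fiberwise_of_maps_to (g := Finset.card) (t := Finset.Icc 1 n) ?_]
  · refine Finset.sum_congr rfl fun k hk => ?_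
    rw [Finset.mem_Icc] at hk
    have hval : ∀ B ∈ (univ.filter fun B : Finset (Fin n) => B.Nonempty).filter
        (fun B => B.card = k),
        Polynomial.C (w B.card) * apPoly w ((univ : Finset (Fin n)) \ B) =
        Polynomial.C (w k) * aPoly w (n - k) := by
      intro B hB
      rw [Finset.mem_filter] at hB
      have hcard : B.card = k := hB.2
      have : apPoly w ((univ : Finset (Fin n)) \ B) = aPoly w (n - k) := by
        refine apPoly_congr w _ _ ?_
        rw [Finset.card_sdiff_of_subset (Finset.subset_univ B), hcardu, hcard,
          Finset.card_univ, Fintype.card_fin]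
      rw [this, hcard]
    rw [Finset.sum_congr rfl hval, Finset.sum_const]
    have hseteq : (univ.filter fun B : Finset (Fin n) => B.Nonempty).filter
        (fun B => B.card = k) = Finset.powersetCard k univ := by
      ext B
      simp only [Finset.mem_filter, Finset.mem_univ, true_and, Finset.mem_powersetCard]
      constructor
      · rintro ⟨-, h⟩
        exact ⟨Finset.subset_univ B, h⟩
      · rintro ⟨-, h⟩
        refine ⟨?_, h⟩
        rw [← Finset.card_pos, h]
        omega
    rw [hseteq, Finset.card_powersetCard, hcardu, nsmul_eq_mul, Polynomial.C_mul,
      Polynomial.C_eq_natCast]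
    ring
  · intro B hB
    rw [Finset.mem_filter] at hB
    rw [Finset.mem_Icc]
    constructor
    · rw [Nat.one_le_iff_ne_zero, ← Nat.pos_iff_ne_zero, Finset.card_pos]
      exact hB.2
    · exact le_trans (Finset.card_le_univ B) (le_of_eq hcardu)

lemma zetaRel_self (w : ℕ → R) (hw : w 1 = 1) {n : ℕ}
    (σ : Finpartition (univ : Finset (Fin n))) : zetaRel w σ σ = 1 := by
  rw [zetaRel]
  refine Finset.prod_eq_one fun B hB => ?_
  have : σ.parts.filter (fun A => A ⊆ B) = {B} := by
    ext A
    simp only [Finset.mem_filter, Finset.mem_singleton]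
    constructor
    · rintro ⟨hA, hAB⟩
      obtain ⟨a, ha⟩ := σ.nonempty_of_mem_parts hA
      exact σ.eq_of_mem_parts hA hB ha (hAB ha)
    · rintro rfl
      exact ⟨hB, le_rfl⟩
  rw [this, Finset.card_singleton, hw]

/-- The delta identity for `µ^w`. -/
lemma sum_muW_zeta (w : ℕ → R) (hw : w 1 = 1) {n : ℕ}
    (σ : Finpartition (univ : Finset (Fin n))) :
    ∑ τ ∈ univ.filter (fun τ : Finpartition (univ : Finset (Fin n)) => τ ≤ σ),
      muW w ⊥ τ * zetaRel w τ σ = if σ = ⊥ then 1 else 0 := by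
  rcases eq_or_ne σ ⊥ with rfl | hσ
  · rw [if_pos rfl]
    have hfilter : (univ.filter fun τ : Finpartition (univ : Finset (Fin n)) => τ ≤ ⊥) = {⊥} := by
      ext τ
      simp [le_bot_iff]
    rw [hfilter, Finset.sum_singleton, zetaRel_self w hw, mul_one, muW, if_pos rfl]
  · rw [if_neg hσ]
    have hsplit : (univ.filter fun τ : Finpartition (univ : Finset (Fin n)) => τ ≤ σ) =
        insert σ (univ.filter fun τ => τ < σ) := by
      ext τ
      simp only [Finset.mem_filter, Finset.mem_univ, true_and, Finset.mem_insert]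
      rw [le_iff_lt_or_eq]
      tauto
    have hnotmem : σ ∉ (univ.filter fun τ : Finpartition (univ : Finset (Fin n)) => τ < σ) := by
      simp
    rw [hsplit, Finset.sum_insert hnotmem, zetaRel_self w hw, mul_one]
    have hmu : muW w ⊥ σ = -∑ τ ∈ (univ.filter fun τ : Finpartition (univ : Finset (Fin n)) =>
        τ < σ), muW w ⊥ τ * zetaRel w τ σ := by
      rw [muW, if_neg (Ne.symm hσ)]
      congr 1
      have hfe : (Finset.univ.filter fun τ : Finpartition (univ : Finset (Fin n)) =>
          ⊥ ≤ τ ∧ τ < σ) = univ.filter fun τ => τ < σ := by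
        ext τ
        simp
      rw [← hfe]
      exact Finset.sum_attach _ (fun τ => muW w ⊥ τ * zetaRel w τ σ)
    rw [hmu, neg_add_cancel]

/-! ### The `U` transform -/

/-- The linear transform sending `X^m` to `aPoly w m`. -/
noncomputable def uMap (w : ℕ → R) (p : Polynomial R) : Polynomial R :=
  ∑ m ∈ Finset.range (p.natDegree + 1), Polynomial.C (p.coeff m) * aPoly w m

lemma uMap_eq_of_le (w : ℕ → R) (p : Polynomial R) {N : ℕ} (h : p.natDegree ≤ N) :
    uMap w p = ∑ m ∈ Finset.range (N + 1), Polynomial.C (p.coeff m) * aPoly w m := by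
  rw [uMap]
  refine Finset.sum_subset (by intro m hm; simp only [Finset.mem_range] at hm ⊢; omega) ?_
  intro m hm hnm
  simp only [Finset.mem_range] at hm hnm
  rw [Polynomial.coeff_eq_zero_of_natDegree_lt (by omega), Polynomial.C_0, zero_mul]

lemma uMap_add (w : ℕ → R) (p q : Polynomial R) : uMap w (p + q) = uMap w p + uMap w q := by
  set N := max p.natDegree q.natDegree with hN
  rw [uMap_eq_of_le w p (le_max_left _ _), uMap_eq_of_le w q (le_max_right _ _),
    uMap_eq_of_le w (p + q) (le_trans (Polynomial.natDegree_add_le p q) le_rfl),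
    ← Finset.sum_add_distrib]
  refine Finset.sum_congr rfl fun m _ => ?_
  rw [Polynomial.coeff_add, Polynomial.C_add, add_mul]

lemma uMap_sub (w : ℕ → R) (p q : Polynomial R) : uMap w (p - q) = uMap w p - uMap w q := by
  have := uMap_add w (p - q) q
  rw [sub_add_cancel] at this
  rw [this]
  ring

lemma uMap_CXpow (w : ℕ → R) (c : R) (m : ℕ) :
    uMap w (Polynomial.C c * Polynomial.X ^ m) = Polynomial.C c * aPoly w m := by
  have hdeg : (Polynomial.C c * Polynomial.X ^ m : Polynomial R).natDegree ≤ m := by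
    exact le_trans (Polynomial.natDegree_C_mul_le _ _) (Polynomial.natDegree_X_pow_le _)
  rw [uMap_eq_of_le w _ hdeg]
  rw [Finset.sum_eq_single m]
  · rw [Polynomial.coeff_C_mul, Polynomial.coeff_X_pow, if_pos rfl, mul_one]
  · intro j _ hj
    rw [Polynomial.coeff_C_mul, Polynomial.coeff_X_pow, if_neg hj, mul_zero,
      Polynomial.C_0, zero_mul]
  · intro h
    exact absurd (Finset.mem_range.mpr (by omega)) h

lemma uMap_zero (w : ℕ → R) : uMap w (0 : Polynomial R) = 0 := by
  simp [uMap]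

lemma uMap_sum (w : ℕ → R) {ι : Type*} (S : Finset ι) (f : ι → Polynomial R) :
    uMap w (∑ i ∈ S, f i) = ∑ i ∈ S, uMap w (f i) := by
  induction S using Finset.induction_on with
  | empty => simp [uMap_zero]
  | insert _ _ hx ih =>
    rw [Finset.sum_insert hx, Finset.sum_insert hx, uMap_add, ih]

lemma coeff_uMap_natDegree (w : ℕ → R) (hw : w 1 = 1) (p : Polynomial R) :
    (uMap w p).coeff p.natDegree = p.leadingCoeff := by
  rw [uMap, Polynomial.finset_sum_coeff, Finset.sum_eq_single p.natDegree]
  · rw [Polynomial.coeff_C_mul, coeff_aPoly w hw, mul_one, Polynomial.leadingCoeff]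
  · intro m hm hne
    simp only [Finset.mem_range] at hm
    have : m < p.natDegree := by omega
    rw [Polynomial.coeff_C_mul,
      Polynomial.coeff_eq_zero_of_natDegree_lt (lt_of_le_of_lt (natDegree_aPoly_le w m) this),
      mul_zero]
  · intro h
    exact absurd (Finset.mem_range.mpr (by omega)) h

lemma uMap_injective (w : ℕ → R) (hw : w 1 = 1) : Function.Injective (uMap w) := by
  intro p q h
  by_contra hne
  have hr : p - q ≠ 0 := sub_ne_zero.mpr hne
  have h0 : uMap w (p - q) = 0 := by rw [uMap_sub, h, sub_self]
  have := coeff_uMap_natDegree w hw (p - q)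
  rw [h0, Polynomial.coeff_zero] at this
  exact (Polynomial.leadingCoeff_ne_zero.mpr hr) this.symm

end Aux

section Main

open scoped Classical

lemma bot_parts_card (n : ℕ) : (⊥ : Finpartition (univ : Finset (Fin n))).parts.card = n := by
  rw [Finpartition.card_bot, Finset.card_univ, Fintype.card_fin]

lemma uMap_one (w : ℕ → R) : uMap w (1 : Polynomial R) = 1 := by
  have h1 : (1 : Polynomial R) = Polynomial.C (1 : R) * Polynomial.X ^ 0 := by simp
  rw [h1, uMap_CXpow, aPoly, Finset.univ_eq_empty, apPoly_empty]
  simp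

lemma natDegree_bPoly_le (w : ℕ → R) (n : ℕ) : (bPoly w n).natDegree ≤ n := by
  rw [bPoly]
  split
  · simp
  · refine Polynomial.natDegree_sum_le_of_forall_le _ _ fun π _ => ?_
    refine le_trans (Polynomial.natDegree_C_mul_le _ _)
      (le_trans (Polynomial.natDegree_X_pow_le _) ?_)
    exact le_trans π.card_parts_le_card (by rw [Finset.card_univ, Fintype.card_fin])

lemma uMap_C_mul (w : ℕ → R) (c : R) (p : Polynomial R) :
    uMap w (Polynomial.C c * p) = Polynomial.C c * uMap w p := by
  rw [uMap_eq_of_le w (Polynomial.C c * p) (Polynomial.natDegree_C_mul_le c p), uMap,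
    Finset.mul_sum]
  refine Finset.sum_congr rfl fun m _ => ?_
  rw [Polynomial.coeff_C_mul, Polynomial.C_mul]
  ring

lemma uMap_bPoly_expand (w : ℕ → R) (n : ℕ) (hn : 1 ≤ n) :
    uMap w (bPoly w n) = ∑ π : Finpartition (univ : Finset (Fin n)),
      Polynomial.C (muW w ⊥ π) * aPoly w π.parts.card := by
  rw [bPoly, if_neg (by omega), uMap_sum]
  exact Finset.sum_congr rfl fun π _ => uMap_CXpow w _ _

/-- `U b_n = X^n`. -/
lemma uMap_bPoly (w : ℕ → R) (hw : w 1 = 1) (n : ℕ) :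
    uMap w (bPoly w n) = Polynomial.X ^ n := by
  rcases Nat.eq_zero_or_pos n with rfl | hn
  · rw [bPoly, if_pos rfl, uMap_one, pow_zero]
  · rw [uMap_bPoly_expand w n hn]
    have h1 : ∀ π : Finpartition (univ : Finset (Fin n)),
        Polynomial.C (muW w ⊥ π) * aPoly w π.parts.card =
        ∑ σ ∈ univ.filter (fun σ : Finpartition (univ : Finset (Fin n)) => π ≤ σ),
          Polynomial.C (muW w ⊥ π * zetaRel w π σ) * Polynomial.X ^ σ.parts.card := by
      intro π
      have : aPoly w π.parts.card = apPoly w π.parts :=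
        apPoly_congr w _ _ (by rw [Finset.card_univ, Fintype.card_fin])
      rw [this, ← sum_zeta_eq_apPoly w π, Finset.mul_sum]
      refine Finset.sum_congr rfl fun σ _ => ?_
      rw [Polynomial.C_mul]
      ring
    rw [Finset.sum_congr rfl (fun π _ => h1 π)]
    rw [Finset.sum_comm' (s' := fun σ => univ.filter
      (fun π : Finpartition (univ : Finset (Fin n)) => π ≤ σ)) (t' := univ) (by simp)]
    have h2 : ∀ σ : Finpartition (univ : Finset (Fin n)),
        ∑ π ∈ univ.filter (fun π : Finpartition (univ : Finset (Fin n)) => π ≤ σ),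
          Polynomial.C (muW w ⊥ π * zetaRel w π σ) * Polynomial.X ^ σ.parts.card =
        Polynomial.C (if σ = ⊥ then (1 : R) else 0) * Polynomial.X ^ σ.parts.card := by
      intro σ
      rw [← Finset.sum_mul, ← map_sum, sum_muW_zeta w hw σ]
    rw [Finset.sum_congr rfl (fun σ _ => h2 σ)]
    rw [Finset.sum_eq_single (⊥ : Finpartition (univ : Finset (Fin n)))]
    · rw [if_pos rfl, Polynomial.C_1, one_mul, bot_parts_card]
    · intro σ _ hσ
      rw [if_neg hσ, Polynomial.C_0, zero_mul]
    · intro h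
      exact absurd (Finset.mem_univ _) h

lemma opOf_eq_of_le (c : ℕ → R) (p : Polynomial R) {N : ℕ} (h : p.natDegree ≤ N) :
    opOf c p = ∑ k ∈ Finset.Icc 1 N,
      (algebraMap ℚ R (1 / k.factorial) * c k) • (Polynomial.derivative^[k] p) := by
  rw [opOf]
  refine Finset.sum_subset (by intro k hk; simp only [Finset.mem_Icc] at hk ⊢; omega) ?_
  intro k hk hnk
  simp only [Finset.mem_Icc] at hk hnk
  rw [Polynomial.iterate_derivative_eq_zero (by omega), smul_zero]

lemma iter_deriv_sum {ι : Type*} (k : ℕ) (S : Finset ι) (f : ι → Polynomial R) :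
    Polynomial.derivative^[k] (∑ i ∈ S, f i) = ∑ i ∈ S, Polynomial.derivative^[k] (f i) := by
  induction k with
  | zero => simp
  | succ k ih =>
    rw [Function.iterate_succ_apply', ih, map_sum]
    exact Finset.sum_congr rfl fun i _ => by rw [Function.iterate_succ_apply']

lemma opN_Xpow (w : ℕ → R) {m N : ℕ} (hm : m ≤ N) :
    ∑ k ∈ Finset.Icc 1 N, (algebraMap ℚ R (1 / k.factorial) * w k) •
      (Polynomial.derivative^[k] ((Polynomial.X : Polynomial R) ^ m)) =
    ∑ k ∈ Finset.Icc 1 m, Polynomial.C (w k * (m.choose k : R)) * Polynomial.X ^ (m - k) := by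
  rw [← Finset.sum_subset (Finset.Icc_subset_Icc_right hm) (fun k hk hnk => by
    simp only [Finset.mem_Icc] at hk hnk
    rw [Polynomial.iterate_derivative_eq_zero
      (lt_of_le_of_lt (Polynomial.natDegree_X_pow_le m) (by omega)), smul_zero])]
  refine Finset.sum_congr rfl fun k hk => ?_
  rw [Finset.mem_Icc] at hk
  rw [Polynomial.iterate_derivative_X_pow_eq_smul, smul_smul]
  have hcoe : algebraMap ℚ R (1 / k.factorial) * w k * (m.descFactorial k : R) =
      w k * (m.choose k : R) := by
    have h1 : ((m.descFactorial k : ℕ) : R) = algebraMap ℚ R ((m.descFactorial k : ℕ) : ℚ) := by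
      rw [map_natCast]
    have h2 : ((m.choose k : ℕ) : R) = algebraMap ℚ R ((m.choose k : ℕ) : ℚ) := by
      rw [map_natCast]
    have hkf : (k.factorial : ℚ) ≠ 0 := by exact_mod_cast k.factorial_ne_zero
    have hq : (1 / (k.factorial : ℚ)) * ((m.descFactorial k : ℕ) : ℚ) = ((m.choose k : ℕ) : ℚ) := by
      rw [Nat.descFactorial_eq_factorial_mul_choose]
      push_cast
      rw [one_div, inv_mul_cancel_left₀ hkf]
    rw [h1, h2, mul_comm (algebraMap ℚ R (1 / k.factorial)) (w k), mul_assoc, ← map_mul, hq]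
  rw [hcoe, Polynomial.smul_eq_C_mul]

lemma uMap_opOf_bPoly (w : ℕ → R) (hw : w 1 = 1) (n : ℕ) (hn : 1 ≤ n) :
    uMap w (opOf w (bPoly w n)) = (n : R) • Polynomial.X ^ (n - 1) := by
  have hopOf : opOf w (bPoly w n) = ∑ π : Finpartition (univ : Finset (Fin n)),
      Polynomial.C (muW w ⊥ π) * ∑ k ∈ Finset.Icc 1 π.parts.card,
        Polynomial.C (w k * (π.parts.card.choose k : R)) *
          Polynomial.X ^ (π.parts.card - k) := by
    rw [opOf_eq_of_le w _ (natDegree_bPoly_le w n), bPoly, if_neg (by omega)]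
    rw [Finset.sum_congr rfl (fun k (_ : k ∈ Finset.Icc 1 n) => by
      rw [iter_deriv_sum, Finset.smul_sum]), Finset.sum_comm]
    refine Finset.sum_congr rfl fun π _ => ?_
    have hcomm : ∀ k ∈ Finset.Icc 1 n,
        (algebraMap ℚ R (1 / k.factorial) * w k) •
          Polynomial.derivative^[k] (Polynomial.C (muW w ⊥ π) *
            Polynomial.X ^ π.parts.card) =
        Polynomial.C (muW w ⊥ π) * ((algebraMap ℚ R (1 / k.factorial) * w k) •
          Polynomial.derivative^[k] ((Polynomial.X : Polynomial R) ^ π.parts.card)) := by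
      intro k _
      rw [Polynomial.iterate_derivative_C_mul, mul_smul_comm]
    rw [Finset.sum_congr rfl hcomm, ← Finset.mul_sum]
    congr 1
    exact opN_Xpow w (le_trans π.card_parts_le_card
      (by rw [Finset.card_univ, Fintype.card_fin]))
  rw [hopOf, uMap_sum]
  have h2 : ∀ π : Finpartition (univ : Finset (Fin n)),
      uMap w (Polynomial.C (muW w ⊥ π) * ∑ k ∈ Finset.Icc 1 π.parts.card,
        Polynomial.C (w k * (π.parts.card.choose k : R)) *
          Polynomial.X ^ (π.parts.card - k)) =
      Polynomial.C (muW w ⊥ π) * Polynomial.derivative (aPoly w π.parts.card) := by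
    intro π
    rw [uMap_C_mul, uMap_sum]
    rw [Finset.sum_congr rfl (fun k _ => uMap_CXpow w _ _), ← derivative_aPoly]
  rw [Finset.sum_congr rfl (fun π _ => h2 π)]
  have h3 : (∑ π : Finpartition (univ : Finset (Fin n)),
      Polynomial.C (muW w ⊥ π) * Polynomial.derivative (aPoly w π.parts.card)) =
      Polynomial.derivative (uMap w (bPoly w n)) := by
    rw [uMap_bPoly_expand w n hn, map_sum]
    exact Finset.sum_congr rfl fun π _ => (Polynomial.derivative_C_mul _ _).symm
  rw [h3, uMap_bPoly w hw n, Polynomial.derivative_X_pow, Polynomial.smul_eq_C_mul]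

/-- Theorem 3.4, part 2 (basic-sequence statement): the Möbius-type enumerators form the
basic sequence of `Λ = ∑_{k ≥ 1} (w(k)/k!) D^k`:  `b_n(0; w) = 0` and
`Λ b_n = n b_{n-1}` for all `n ≥ 1`. -/
theorem bPoly_basic (w : ℕ → R) (hw : w 1 = 1) :
    (∀ n : ℕ, 1 ≤ n → (bPoly w n).eval (0 : R) = 0) ∧
    (∀ n : ℕ, 1 ≤ n → opOf w (bPoly w n) = (n : R) • bPoly w (n - 1)) := by
  constructor
  · intro n hn
    rw [bPoly, if_neg (by omega)]
    rw [Polynomial.eval_finset_sum]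
    refine Finset.sum_eq_zero fun π _ => ?_
    have : Nonempty (Fin n) := ⟨⟨0, hn⟩⟩
    have hpos : 0 < π.parts.card := by
      rw [Finset.card_pos]
      exact π.parts_nonempty (by simpa [Finset.bot_eq_empty] using Finset.univ_nonempty.ne_empty)
    simp [zero_pow hpos.ne']
  · intro n hn
    apply uMap_injective w hw
    rw [uMap_opOf_bPoly w hw n hn,
      show ((n : R) • bPoly w (n - 1)) = Polynomial.C (n : R) * bPoly w (n - 1) from
        Polynomial.smul_eq_C_mul _,
      uMap_C_mul, uMap_bPoly w hw, Polynomial.smul_eq_C_mul]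

end Main
end
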